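/- arXiv:1603.04337 — 9 statements merged into one kernel-verified Lean document; each statement's English description precedes it below -/
import Mathlib

section
/- If the power graph of a group G has finite independence number, then the center Z(G) has finite index in G. -/
open scoped Pointwise


/-- The power graph of a group: distinct `x, y` are adjacent iff one is a power of the other. -/
def powerGraph (G : Type*) [Group G] : SimpleGraph G where
  Adj x y := x ≠ y ∧ ∃ n : ℕ, y = x ^ n ∨ x = y ^ n
  symm := ⟨by rintro x y ⟨h, n, hn⟩; exact ⟨h.symm, n, hn.symm⟩⟩
  loopless := ⟨by rintro x ⟨h, _⟩; exact h rfl⟩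

/-- A set of vertices is independent if no two of its elements are adjacent. -/
def IsIndepSet {V : Type*} (G' : SimpleGraph V) (s : Set V) : Prop :=
  s.Pairwise fun x y => ¬ G'.Adj x y

/-- A subgroup is locally cyclic if every finite subset is contained in the cyclic
subgroup generated by a single element of the subgroup. -/
def LocCyc {G : Type*} [Group G] (A : Subgroup G) : Prop :=
  ∀ s : Finset G, (↑s : Set G) ⊆ (A : Set G) → ∃ c ∈ A, ∀ x ∈ s, x ∈ Subgroup.zpowers c

/-- A locally cyclic subgroup is not covered by finitely many subgroups
none of which contains it. -/
lemma LocCyc.exists_avoid {G : Type*} [Group G] {A : Subgroup G}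
    (hA : LocCyc A) {ι : Type*} (t : Finset ι) (K : ι → Subgroup G)
    (hK : ∀ i ∈ t, ¬ A ≤ K i) : ∃ a ∈ A, ∀ i ∈ t, a ∉ K i := by
  classical
  by_contra hcon
  push_neg at hcon
  have hb : ∀ i ∈ t, ∃ b, b ∈ A ∧ b ∉ K i := by
    intro i hi
    obtain ⟨x, hx1, hx2⟩ := SetLike.not_le_iff_exists.mp (hK i hi)
    exact ⟨x, hx1, hx2⟩
  choose! b hbA hbK using hb
  obtain ⟨c, hcA, hc⟩ := hA (t.image b) (by
    intro x hx
    simp only [Finset.coe_image, Set.mem_image, Finset.mem_coe] at hx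
    obtain ⟨i, hi, rfl⟩ := hx
    exact hbA i hi)
  obtain ⟨i, hit, hciK⟩ := hcon c hcA
  exact hbK i hit (Subgroup.zpowers_le.mpr hciK (hc (b i) (Finset.mem_image_of_mem b hit)))

theorem center_finiteIndex_of_finite_independence_number (G : Type*) [Group G]
    (h : ∃ N : ℕ, ∀ s : Finset G, IsIndepSet (powerGraph G) ↑s → s.card ≤ N) :
    (Subgroup.center G).FiniteIndex := by
  classical
  obtain ⟨N, hN⟩ := h
  set M : Set (Subgroup G) := {A | Maximal LocCyc A} with hM
  -- every element lies in a maximal locally cyclic subgroup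
  have hcov : ∀ g : G, ∃ A ∈ M, g ∈ A := by
    intro g
    have hzg : LocCyc (Subgroup.zpowers g) :=
      fun s hs => ⟨g, Subgroup.mem_zpowers g, fun x hx => hs hx⟩
    have hchainub : ∀ c ⊆ {A : Subgroup G | LocCyc A}, IsChain (· ≤ ·) c →
        ∀ y ∈ c, ∃ ub ∈ {A : Subgroup G | LocCyc A}, ∀ z ∈ c, z ≤ ub := by
      intro c hcs hchain y hy
      refine ⟨sSup c, ?_, fun z hz => le_sSup hz⟩
      have hdir : DirectedOn (· ≤ ·) c := hchain.directedOn
      have find : ∀ fs : Finset G, (↑fs : Set G) ⊆ (sSup c : Subgroup G) →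
          ∃ H ∈ c, (↑fs : Set G) ⊆ (H : Set G) := by
        intro fs
        induction fs using Finset.induction_on with
        | empty => exact fun _ => ⟨y, hy, by simp⟩
        | @insert a s ha ih =>
          intro hsub
          obtain ⟨H1, hH1c, hH1⟩ := ih (by
            intro x hx
            exact hsub (by simp [Finset.mem_coe.mp hx]))
          have hamem : a ∈ sSup c := hsub (by simp)
          obtain ⟨H2, hH2c, ha2⟩ :=
            (Subgroup.mem_sSup_of_directedOn ⟨y, hy⟩ hdir).mp hamem
          obtain ⟨H3, hH3c, h13, h23⟩ := hdir H1 hH1c H2 hH2c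
          refine ⟨H3, hH3c, ?_⟩
          intro x hx
          rcases Finset.mem_insert.mp (Finset.mem_coe.mp hx) with rfl | hxs
          · exact h23 ha2
          · exact h13 (hH1 hxs)
      intro fs hfs
      obtain ⟨H, hHc, hsub⟩ := find fs hfs
      obtain ⟨c0, hc0H, hc0⟩ := hcs hHc fs hsub
      exact ⟨c0, (le_sSup hHc : H ≤ sSup c) hc0H, hc0⟩
    obtain ⟨m, hle, hmax⟩ := zorn_le_nonempty₀ {A : Subgroup G | LocCyc A} hchainub
      (Subgroup.zpowers g) hzg
    exact ⟨m, hmax, hle (Subgroup.mem_zpowers g)⟩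
  -- maximal locally cyclic subgroups don't contain one another
  have hnle : ∀ A ∈ M, ∀ B ∈ M, B ≠ A → ¬ A ≤ B := by
    intro A hA B hB hBA hle
    exact hBA (le_antisymm (hA.2 hB.1 hle) hle)
  -- there are finitely many maximal locally cyclic subgroups
  have hMfin : M.Finite := by
    by_contra hinf
    obtain ⟨t, htM, htcard⟩ := Set.Infinite.exists_subset_card_eq
      hinf (N + 1)
    have hsep : ∀ A ∈ t, ∃ a, a ∈ A ∧ ∀ B ∈ t, B ≠ A → a ∉ B := by
      intro A hA
      have hAM : Maximal LocCyc A := htM hA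
      obtain ⟨a, haA, ha⟩ := hAM.1.exists_avoid (t.erase A) (fun B => B)
        (by
          intro B hB
          have hBt := Finset.mem_erase.mp hB
          exact hnle A hAM B (htM hBt.2) hBt.1)
      exact ⟨a, haA, fun B hB hBA => ha B (Finset.mem_erase.mpr ⟨hBA, hB⟩)⟩
    choose! f hf1 hf2 using hsep
    have hinj : Set.InjOn f ↑t := by
      intro A hA B hB hfAB
      by_contra hne
      exact hf2 B (Finset.mem_coe.mp hB) A (Finset.mem_coe.mp hA) hne
        (hfAB ▸ hf1 A (Finset.mem_coe.mp hA))
    have hindep : IsIndepSet (powerGraph G) ↑(t.image f) := by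
      intro x hx y hy hxy hadj
      obtain ⟨A, hA, rfl⟩ := Finset.mem_image.mp (Finset.mem_coe.mp hx)
      obtain ⟨B, hB, rfl⟩ := Finset.mem_image.mp (Finset.mem_coe.mp hy)
      have hAB : A ≠ B := fun hh => hxy (hh ▸ rfl)
      obtain ⟨-, n, hn | hn⟩ := hadj
      · exact hf2 B hB A hA hAB (hn ▸ pow_mem (hf1 A hA) n)
      · exact hf2 A hA B hB (Ne.symm hAB) (hn ▸ pow_mem (hf1 B hB) n)
    have hcard : (t.image f).card = N + 1 := by
      rw [Finset.card_image_of_injOn hinj, htcard]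
    have := hN (t.image f) hindep
    omega
  -- the covering by the (abelian) maximal locally cyclic subgroups,
  -- reduced to subgroups of finite index by B. H. Neumann's lemma
  have hcovers : ⋃ A ∈ hMfin.toFinset, (1 : G) • ((fun A : Subgroup G => A) A : Set G)
      = Set.univ := by
    rw [Set.eq_univ_iff_forall]
    intro g
    obtain ⟨A, hAM, hgA⟩ := hcov g
    exact Set.mem_biUnion (hMfin.mem_toFinset.mpr hAM) (by simpa using hgA)
  have hfc := Subgroup.leftCoset_cover_filter_FiniteIndex
    (g := fun _ : Subgroup G => (1 : G)) (H := fun A : Subgroup G => A)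
    (s := hMfin.toFinset) hcovers
  set sf : Finset (Subgroup G) :=
    hMfin.toFinset.filter (fun A => Subgroup.FiniteIndex A) with hsf
  have hKfi : (⨅ A ∈ sf, A).FiniteIndex :=
    Subgroup.finiteIndex_iInf' (fun A : Subgroup G => A)
      (fun A hA => (Finset.mem_filter.mp hA).2)
  have hle : (⨅ A ∈ sf, A) ≤ Subgroup.center G := by
    intro k hk
    rw [Subgroup.mem_center_iff]
    intro g
    have hg : g ∈ ⋃ A ∈ sf, (1 : G) • ((A : Subgroup G) : Set G) := by
      rw [hfc]; exact Set.mem_univ g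
    obtain ⟨A, hA, hgA⟩ := Set.mem_iUnion₂.mp hg
    have hgA' : g ∈ A := by simpa using hgA
    have hkA : k ∈ A := (biInf_le (fun A : Subgroup G => A) hA : (⨅ A ∈ sf, A) ≤ A) hk
    have hAM : Maximal LocCyc A := hMfin.mem_toFinset.mp (Finset.mem_filter.mp hA).1
    obtain ⟨c, hcA, hc⟩ := hAM.1 {g, k} (by
      intro x hx
      rcases Finset.mem_insert.mp (Finset.mem_coe.mp hx) with rfl | hx'
      · exact hgA'
      · exact (Finset.mem_singleton.mp hx') ▸ hkA)
    obtain ⟨m, hm⟩ := Subgroup.mem_zpowers_iff.mp (hc g (by simp))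
    obtain ⟨n, hn⟩ := Subgroup.mem_zpowers_iff.mp (hc k (by simp))
    rw [← hm, ← hn, ← zpow_add, ← zpow_add, add_comm]
  haveI := hKfi
  exact Subgroup.finiteIndex_of_le hle
end

section
/- If p is a prime and G is a p-group whose power graph has finite independence number, then either G is finite or G is isomorphic to the Prüfer group C_{p^∞}. -/
/-- The Prüfer `p`-group: the `p`-primary component of `ℚ/ℤ`. -/
def pruferGroup (p : ℕ) : AddSubgroup (ℚ ⧸ AddSubgroup.zmultiples (1 : ℚ)) where
  carrier := {x | ∃ n : ℕ, p ^ n • x = 0}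
  zero_mem' := ⟨0, smul_zero _⟩
  add_mem' := by
    rintro a b ⟨m, hm⟩ ⟨n, hn⟩
    refine ⟨m + n, ?_⟩
    have ha : p ^ (m + n) • a = 0 := by rw [pow_add, mul_comm, mul_smul, hm, smul_zero]
    have hb : p ^ (m + n) • b = 0 := by rw [pow_add, mul_smul, hn, smul_zero]
    rw [smul_add, ha, hb, add_zero]
  neg_mem' := by
    rintro a ⟨m, hm⟩
    exact ⟨m, by rw [smul_neg, hm, neg_zero]⟩

namespace PGP
open Subgroup
variable {p : ℕ} {G : Type*} [Group G]


lemma fin_ord (hp : p.Prime) (hG : IsPGroup p G) (g : G) : IsOfFinOrder g := by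
  obtain ⟨k, hk⟩ := hG g
  exact isOfFinOrder_iff_pow_eq_one.mpr ⟨p ^ k, pow_pos hp.pos k, hk⟩

lemma ord_pow_p (hp : p.Prime) (hG : IsPGroup p G) (g : G) : ∃ k, orderOf g = p ^ k := by
  obtain ⟨k, hk⟩ := hG g
  obtain ⟨j, _, hj⟩ := (Nat.dvd_prime_pow hp).mp (orderOf_dvd_of_pow_eq_one hk)
  exact ⟨j, hj⟩

lemma mem_zpow_iff_nat (hp : p.Prime) (hG : IsPGroup p G) {a b : G} :
    a ∈ zpowers b ↔ ∃ n : ℕ, a = b ^ n := by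
  rw [← (fin_ord hp hG b).mem_powers_iff_mem_zpowers]
  constructor
  · rintro ⟨n, rfl⟩; exact ⟨n, rfl⟩
  · rintro ⟨n, rfl⟩; exact ⟨n, rfl⟩

/-- comparability -/
def Cmp (a b : G) : Prop := a ∈ zpowers b ∨ b ∈ zpowers a

lemma cmp_symm {a b : G} (h : Cmp a b) : Cmp b a := h.symm

lemma cmp_self (a : G) : Cmp a a := Or.inl (mem_zpowers a)

lemma adj_iff (hp : p.Prime) (hG : IsPGroup p G) {a b : G} :
    (powerGraph G).Adj a b ↔ a ≠ b ∧ Cmp a b := by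
  unfold powerGraph Cmp
  show (a ≠ b ∧ ∃ n : ℕ, b = a ^ n ∨ a = b ^ n) ↔ _
  constructor
  · rintro ⟨hne, n, h | h⟩
    · exact ⟨hne, Or.inr ((mem_zpow_iff_nat hp hG).mpr ⟨n, h⟩)⟩
    · exact ⟨hne, Or.inl ((mem_zpow_iff_nat hp hG).mpr ⟨n, h⟩)⟩
  · rintro ⟨hne, h | h⟩
    · obtain ⟨n, hn⟩ := (mem_zpow_iff_nat hp hG).mp h
      exact ⟨hne, n, Or.inr hn⟩
    · obtain ⟨n, hn⟩ := (mem_zpow_iff_nat hp hG).mp h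
      exact ⟨hne, n, Or.inl hn⟩

lemma indep_of_pairwise (hp : p.Prime) (hG : IsPGroup p G) {s : Set G}
    (h : s.Pairwise fun a b => ¬ Cmp a b) : IsIndepSet (powerGraph G) s := by
  intro a ha b hb hne hadj
  exact h ha hb hne ((adj_iff hp hG).mp hadj).2


lemma zpowers_finite (hp : p.Prime) (hG : IsPGroup p G) (a : G) :
    ((zpowers a : Subgroup G) : Set G).Finite :=
  finite_zpowers.mpr (fin_ord hp hG a)

/-- order of the canonical power -/
lemma ord_can {z : G} {k j : ℕ} (hp : p.Prime) (hz : orderOf z = p ^ k) (hjk : j ≤ k) :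
    orderOf (z ^ p ^ (k - j)) = p ^ j := by
  rw [orderOf_pow' z (pow_ne_zero _ hp.pos.ne'), hz,
    Nat.gcd_eq_right (pow_dvd_pow p (Nat.sub_le k j)), Nat.pow_div (Nat.sub_le k j) hp.pos,
    Nat.sub_sub_self hjk]

/-- any element of a cyclic `p`-group is in the canonical subgroup of its order -/
lemma mem_can {z a : G} {k j : ℕ} (hp : p.Prime) (hz : orderOf z = p ^ k)
    (ha : a ∈ zpowers z) (haj : orderOf a = p ^ j) (hjk : j ≤ k) :
    a ∈ zpowers (z ^ p ^ (k - j)) := by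
  obtain ⟨t, rfl⟩ := mem_zpowers_iff.mp ha
  have h1 : (z ^ t) ^ ((p:ℤ) ^ j) = 1 := by
    have h0 := pow_orderOf_eq_one (z ^ t)
    rw [haj] at h0
    rw [show ((p:ℤ)^j) = ((p^j : ℕ) : ℤ) by push_cast; rfl, zpow_natCast]
    exact h0
  rw [← zpow_mul] at h1
  have h2 : ((p:ℤ) ^ k) ∣ t * (p:ℤ) ^ j := by
    have h0 := orderOf_dvd_iff_zpow_eq_one.mpr h1
    rw [hz] at h0
    exact_mod_cast h0
  have h3 : ((p:ℤ) ^ (k - j)) ∣ t := by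
    have hkj : (p:ℤ) ^ k = p ^ (k - j) * p ^ j := by
      rw [← pow_add, Nat.sub_add_cancel hjk]
    rw [hkj] at h2
    exact (mul_dvd_mul_iff_right ((pow_pos (by exact_mod_cast hp.pos : (0:ℤ) < (p:ℤ)) j)).ne').mp
      (by rwa [mul_comm ((p:ℤ)^(k-j)) _, mul_comm t _] at h2 ⊢)
  obtain ⟨u, hu⟩ := h3
  refine mem_zpowers_iff.mpr ⟨u, ?_⟩
  rw [← zpow_natCast z (p ^ (k - j)), ← zpow_mul]
  congr 1
  push_cast [hu]
  ring

lemma zpowers_eq_of_mem_of_ord_eq (hp : p.Prime) (hG : IsPGroup p G) {a b : G}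
    (hab : a ∈ zpowers b) (hord : orderOf a = orderOf b) : zpowers a = zpowers b := by
  have : Finite (zpowers b : Subgroup G) := (zpowers_finite hp hG b).to_subtype
  exact Subgroup.eq_of_le_of_card_ge (zpowers_le.mpr hab)
    (le_of_eq (by rw [Nat.card_zpowers, Nat.card_zpowers, hord]))

/-- two elements of a common cyclic subgroup, of equal order, generate the same subgroup -/
lemma zpowers_eq_of_same (hp : p.Prime) (hG : IsPGroup p G) {z a b : G}
    (ha : a ∈ zpowers z) (hb : b ∈ zpowers z) (hord : orderOf a = orderOf b) :
    zpowers a = zpowers b := by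
  obtain ⟨k, hk⟩ := ord_pow_p hp hG z
  obtain ⟨j, hj⟩ := ord_pow_p hp hG a
  have hjk : j ≤ k := by
    have := orderOf_dvd_of_mem_zpowers ha
    rw [hj, hk] at this
    exact (Nat.pow_dvd_pow_iff_le_right hp.one_lt).mp this
  have h1 := mem_can hp hk ha hj hjk
  have h2 := mem_can hp hk hb (hord ▸ hj) hjk
  rw [zpowers_eq_of_mem_of_ord_eq hp hG h1 (by rw [hj, ord_can hp hk hjk]),
    zpowers_eq_of_mem_of_ord_eq hp hG h2 (by rw [← hord, hj, ord_can hp hk hjk])]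

/-- any two elements of a cyclic subgroup of a p-group are comparable -/
lemma cmp_of_mem (hp : p.Prime) (hG : IsPGroup p G) {z a b : G}
    (ha : a ∈ zpowers z) (hb : b ∈ zpowers z) : Cmp a b := by
  obtain ⟨k, hk⟩ := ord_pow_p hp hG z
  obtain ⟨i, hi⟩ := ord_pow_p hp hG a
  obtain ⟨j, hj⟩ := ord_pow_p hp hG b
  have hik : i ≤ k := (Nat.pow_dvd_pow_iff_le_right hp.one_lt).mp
    (hi ▸ hk ▸ orderOf_dvd_of_mem_zpowers ha)
  have hjk : j ≤ k := (Nat.pow_dvd_pow_iff_le_right hp.one_lt).mp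
    (hj ▸ hk ▸ orderOf_dvd_of_mem_zpowers hb)
  rcases le_total i j with hij | hij
  · left
    have h1 := mem_can hp hk ha hi hik
    have h2 : zpowers b = zpowers (z ^ p ^ (k - j)) :=
      zpowers_eq_of_same hp hG hb (pow_mem (mem_zpowers z) _) (by rw [hj, ord_can hp hk hjk])
    rw [h2]
    have : z ^ p ^ (k - i) ∈ zpowers (z ^ p ^ (k - j)) := by
      refine mem_zpowers_iff.mpr ⟨(p:ℤ) ^ (j - i), ?_⟩
      rw [← zpow_natCast z (p ^ (k-j)), ← zpow_mul, ← zpow_natCast z (p ^ (k-i))]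
      congr 1
      push_cast [← pow_add]
      congr 1
      omega
    exact (zpowers_le.mpr this) h1
  · right
    have h1 := mem_can hp hk hb hj hjk
    have h2 : zpowers a = zpowers (z ^ p ^ (k - i)) :=
      zpowers_eq_of_same hp hG ha (pow_mem (mem_zpowers z) _) (by rw [hi, ord_can hp hk hik])
    rw [h2]
    have : z ^ p ^ (k - j) ∈ zpowers (z ^ p ^ (k - i)) := by
      refine mem_zpowers_iff.mpr ⟨(p:ℤ) ^ (i - j), ?_⟩
      rw [← zpow_natCast z (p ^ (k-i)), ← zpow_mul, ← zpow_natCast z (p ^ (k-j))]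
      congr 1
      push_cast [← pow_add]
      congr 1
      omega
    exact (zpowers_le.mpr this) h1


/-- greedy construction: a set all of whose elements have finite conflict sets is finite. -/
lemma finite_of_conflicts (hp : p.Prime) (hG : IsPGroup p G) {N : ℕ}
    (hN : ∀ s : Finset G, IsIndepSet (powerGraph G) ↑s → s.card ≤ N) {S : Set G}
    (hconf : ∀ a ∈ S, {z ∈ S | Cmp a z}.Finite) : S.Finite := by
  classical
  by_contra hinf
  replace hinf : S.Infinite := hinf
  have build : ∀ r : ℕ, ∃ s : Finset G, ↑s ⊆ S ∧ s.card = r ∧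
      (↑s : Set G).Pairwise fun a b => ¬ Cmp a b := by
    intro r
    induction r with
    | zero => exact ⟨∅, by simp, by simp, by simp⟩
    | succ r ih =>
      obtain ⟨s, hsS, hcard, hpw⟩ := ih
      have hEx : (⋃ a ∈ (↑s : Set G), {z ∈ S | Cmp a z}).Finite :=
        Set.Finite.biUnion s.finite_toSet fun a ha => hconf a (hsS ha)
      obtain ⟨b, hbS, hbEx⟩ := Set.Infinite.nonempty (hinf.diff hEx)
      have hbs : b ∉ s := by
        intro hbs
        exact hbEx (Set.mem_biUnion (by exact_mod_cast hbs) ⟨hbS, cmp_self b⟩)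
      refine ⟨insert b s, ?_, ?_, ?_⟩
      · rw [Finset.coe_insert]
        exact Set.insert_subset hbS hsS
      · rw [Finset.card_insert_of_notMem hbs, hcard]
      · rw [Finset.coe_insert]
        refine hpw.insert fun a ha hne => ?_
        have hnc : ¬ Cmp a b := fun hc =>
          hbEx (Set.mem_biUnion ha ⟨hbS, hc⟩)
        exact ⟨fun hc => hnc (cmp_symm hc), hnc⟩
  obtain ⟨s, _, hcard, hpw⟩ := build (N + 1)
  have := hN s (indep_of_pairwise hp hG hpw)
  omega

lemma orderClass_finite (hp : p.Prime) (hG : IsPGroup p G) {N : ℕ}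
    (hN : ∀ s : Finset G, IsIndepSet (powerGraph G) ↑s → s.card ≤ N) (n : ℕ) :
    {x : G | orderOf x = p ^ n}.Finite := by
  refine finite_of_conflicts hp hG hN fun a ha => ?_
  refine Set.Finite.subset (zpowers_finite hp hG a) ?_
  rintro z ⟨hz, hc | hc⟩
  · have hzz := zpowers_eq_of_mem_of_ord_eq hp hG hc (by rw [Set.mem_setOf_eq.mp ha, Set.mem_setOf_eq.mp hz])
    have : z ∈ zpowers a := hzz ▸ mem_zpowers z
    exact this
  · exact hc

lemma boundedOrder_finite (hp : p.Prime) (hG : IsPGroup p G) {N : ℕ}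
    (hN : ∀ s : Finset G, IsIndepSet (powerGraph G) ↑s → s.card ≤ N) (m : ℕ) :
    {z : G | orderOf z ≤ m}.Finite := by
  have hsub : {z : G | orderOf z ≤ m} ⊆
      ⋃ j ∈ Finset.range (m + 1), {x : G | orderOf x = p ^ j} := by
    intro z hz
    obtain ⟨k, hk⟩ := ord_pow_p hp hG z
    have hk2 : k < p ^ k :=
      lt_of_lt_of_le (Nat.lt_pow_self (by norm_num : 1 < 2) : k < 2 ^ k) (Nat.pow_le_pow_left hp.two_le k)
    have : k ≤ m := by
      have := hz
      rw [Set.mem_setOf_eq, hk] at this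
      omega
    exact Set.mem_biUnion (Finset.mem_range.mpr (by omega)) hk
  exact Set.Finite.subset (Set.Finite.biUnion (Finset.range (m+1)).finite_toSet
    fun j _ => orderClass_finite hp hG hN j) hsub

lemma exists_big (hp : p.Prime) (hG : IsPGroup p G) {N : ℕ}
    (hN : ∀ s : Finset G, IsIndepSet (powerGraph G) ↑s → s.card ≤ N) [Infinite G]
    (m : ℕ) : ∃ z : G, ∃ k, orderOf z = p ^ k ∧ m ≤ k := by
  by_contra hb
  push_neg at hb
  have : (Set.univ : Set G).Finite := by
    refine Set.Finite.subset (boundedOrder_finite hp hG hN (p ^ m)) fun z _ => ?_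
    obtain ⟨k, hk⟩ := ord_pow_p hp hG z
    have := hb z k hk
    rw [Set.mem_setOf_eq, hk]
    exact Nat.pow_le_pow_right hp.pos (by omega)
  exact Set.infinite_univ this

/-- `x` lies in cyclic subgroups of unbounded order. -/
def Good (p : ℕ) {G : Type*} [Group G] (x : G) : Prop :=
  ∀ m : ℕ, ∃ y : G, x ∈ zpowers y ∧ ∃ k, orderOf y = p ^ k ∧ m ≤ k

lemma Good.of_mem {z b : G} (hg : Good p z) (hb : b ∈ zpowers z) : Good p b := fun m =>
  let ⟨y, h1, h2⟩ := hg m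
  ⟨y, zpowers_le.mpr h1 hb, h2⟩

lemma good_one (hp : p.Prime) (hG : IsPGroup p G) {N : ℕ}
    (hN : ∀ s : Finset G, IsIndepSet (powerGraph G) ↑s → s.card ≤ N) [Infinite G] :
    Good p (1 : G) := by
  intro m
  obtain ⟨z, k, hk, hm⟩ := exists_big hp hG hN m
  exact ⟨z, one_mem _, k, hk, hm⟩

lemma bad_finite (hp : p.Prime) (hG : IsPGroup p G) {N : ℕ}
    (hN : ∀ s : Finset G, IsIndepSet (powerGraph G) ↑s → s.card ≤ N) :
    {a : G | ¬ Good p a}.Finite := by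
  refine finite_of_conflicts hp hG hN fun a ha => ?_
  rw [Set.mem_setOf_eq, Good] at ha
  push_neg at ha
  obtain ⟨m, hm⟩ := ha
  refine Set.Finite.subset ((zpowers_finite hp hG a).union
    (boundedOrder_finite hp hG hN (p ^ m))) ?_
  rintro z ⟨_, hc | hc⟩
  · obtain ⟨k, hk⟩ := ord_pow_p hp hG z
    refine Or.inr ?_
    have := hm z hc k hk
    rw [Set.mem_setOf_eq, hk]
    exact Nat.pow_le_pow_right hp.pos (by omega)
  · exact Or.inl hc


lemma up (hp : p.Prime) (hG : IsPGroup p G) {N : ℕ}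
    (hN : ∀ s : Finset G, IsIndepSet (powerGraph G) ↑s → s.card ≤ N)
    {a : G} (hg : Good p a) :
    ∃ b : G, b ^ p = a ∧ orderOf b = p * orderOf a ∧ Good p b := by
  obtain ⟨n, hn⟩ := ord_pow_p hp hG a
  have hy : ∀ m : ℕ, ∃ z : G, a ∈ zpowers z ∧ orderOf z = p ^ (n + 1) ∧
      ∃ y : G, z ∈ zpowers y ∧ ∃ k, orderOf y = p ^ k ∧ m ≤ k := by
    intro m
    obtain ⟨y, hay, k, hyk, hmk⟩ := hg (max (n + 1) m)
    have hn1k : n + 1 ≤ k := le_trans (le_max_left _ _) hmk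
    have hnk : n ≤ k := by omega
    refine ⟨y ^ p ^ (k - (n + 1)), ?_, ord_can hp hyk hn1k, y,
      pow_mem (mem_zpowers y) _, k, hyk, le_trans (le_max_right _ _) hmk⟩
    have h1 := mem_can hp hyk hay hn hnk
    have h2 : y ^ p ^ (k - n) ∈ zpowers (y ^ p ^ (k - (n + 1))) := by
      refine mem_zpowers_iff.mpr ⟨(p : ℤ), ?_⟩
      rw [← zpow_natCast y (p ^ (k - (n+1))), ← zpow_mul, ← zpow_natCast y (p ^ (k - n))]
      congr 1
      push_cast [← pow_succ]
      congr 1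
      omega
    exact zpowers_le.mpr h2 h1
  classical
  set f : ℕ → G := fun m => (hy m).choose with hf
  have hfE : ∀ m, f m ∈ {x : G | orderOf x = p ^ (n + 1)} := fun m => (hy m).choose_spec.2.1
  have hfiber : ∃ z : G, {m | f m = z}.Infinite := by
    by_contra hcon
    push_neg at hcon
    have : (Set.univ : Set ℕ).Finite := by
      refine Set.Finite.subset (Set.Finite.biUnion (orderClass_finite hp hG hN (n+1))
        (fun z _ => hcon z)) fun m _ => ?_
      exact Set.mem_biUnion (hfE m) rfl
    exact Set.infinite_univ this
  obtain ⟨z, hzfib⟩ := hfiber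
  obtain ⟨m₀, hm₀⟩ := hzfib.nonempty
  have haz : a ∈ zpowers z := hm₀ ▸ (hy m₀).choose_spec.1
  have hoz : orderOf z = p ^ (n + 1) := hm₀ ▸ (hy m₀).choose_spec.2.1
  have hgz : Good p z := by
    intro m
    obtain ⟨m', hm', hmm'⟩ := hzfib.exists_gt m
    obtain ⟨y, hzy, k, hyk, hk⟩ := (hy m').choose_spec.2.2
    exact ⟨y, hm' ▸ hzy, k, hyk, by omega⟩
  obtain ⟨t, hta⟩ := (mem_zpow_iff_nat hp hG).mp haz
  rcases Nat.eq_zero_or_pos n with hn0 | hnpos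
  · subst hn0
    have ha1 : a = 1 := orderOf_eq_one_iff.mp (by rw [hn, pow_zero])
    refine ⟨z, ?_, ?_, hgz⟩
    · have hz1 : z ^ orderOf z = 1 := pow_orderOf_eq_one z
      rw [hoz, zero_add, pow_one] at hz1
      rw [ha1, hz1]
    · rw [ha1, orderOf_one, hoz, pow_one, mul_one]
  · have ht0 : t ≠ 0 := by
      rintro rfl
      rw [pow_zero] at hta
      rw [hta, orderOf_one] at hn
      exact absurd hn.symm (Nat.one_lt_pow hnpos.ne' hp.one_lt).ne'
    have hot : orderOf (z ^ t) = p ^ (n + 1) / Nat.gcd (p ^ (n + 1)) t := by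
      rw [orderOf_pow' z ht0, hoz]
    have hgcd : Nat.gcd (p ^ (n + 1)) t = p := by
      obtain ⟨i, hile, hieq⟩ := (Nat.dvd_prime_pow hp).mp
        (Nat.gcd_dvd_left (p ^ (n + 1)) t)
      rw [← hta, hn, hieq, Nat.pow_div hile hp.pos] at hot
      have := Nat.pow_right_injective hp.two_le hot.symm
      have hi1 : i = 1 := by omega
      rw [hieq, hi1, pow_one]
    have hpt : p ∣ t := hgcd ▸ Nat.gcd_dvd_right (p ^ (n + 1)) t
    obtain ⟨u, hu⟩ := hpt
    have hu0 : u ≠ 0 := by rintro rfl; simp at hu; exact ht0 hu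
    have hcop : Nat.Coprime (p ^ (n + 1)) u := by
      have h1 : p * Nat.gcd (p ^ n) u = p := by
        rw [← Nat.gcd_mul_left, ← pow_succ', ← hu]
        exact hgcd
      have h2 : Nat.gcd (p ^ n) u = 1 :=
        Nat.eq_of_mul_eq_mul_left hp.pos (h1.trans (mul_one p).symm)
      have h3 : Nat.Coprime p u :=
        Nat.Coprime.coprime_dvd_left (dvd_pow_self p hnpos.ne') h2
      exact h3.pow_left _
    refine ⟨z ^ u, ?_, ?_, hgz.of_mem (pow_mem (mem_zpowers z) u)⟩
    · rw [← pow_mul, mul_comm u p, ← hu, ← hta]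
    · rw [orderOf_pow' z hu0, hoz, Nat.Coprime.gcd_eq_one hcop, Nat.div_one, hn, pow_succ']

def IsTower (p : ℕ) {G : Type*} [Group G] (x : ℕ → G) : Prop :=
  (∀ n, orderOf (x n) = p ^ n) ∧ ∀ n, x (n + 1) ^ p = x n

lemma tower_pow {x : ℕ → G} (hx : IsTower p x) (d n : ℕ) : x (n + d) ^ p ^ d = x n := by
  induction d with
  | zero => simp
  | succ d ih =>
    have e : n + (d + 1) = (n + d) + 1 := by omega
    rw [e, pow_succ', pow_mul, hx.2 (n + d), ih]

lemma tower_le {x : ℕ → G} (hx : IsTower p x) {n m : ℕ} (h : n ≤ m) :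
    zpowers (x n) ≤ zpowers (x m) := by
  refine zpowers_le.mpr ?_
  have := tower_pow hx (m - n) n
  rw [show n + (m - n) = m by omega] at this
  exact this ▸ pow_mem (mem_zpowers (x m)) _

def towerSub {x : ℕ → G} (hx : IsTower p x) : Subgroup G where
  carrier := {g | ∃ n, g ∈ zpowers (x n)}
  one_mem' := ⟨0, one_mem _⟩
  mul_mem' := by
    rintro a b ⟨n, hn⟩ ⟨m, hm⟩
    exact ⟨max n m, mul_mem (tower_le hx (le_max_left n m) hn)
      (tower_le hx (le_max_right n m) hm)⟩
  inv_mem' := by rintro a ⟨n, hn⟩; exact ⟨n, inv_mem hn⟩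

lemma mem_towerSub {x : ℕ → G} {hx : IsTower p x} {g : G} :
    g ∈ towerSub hx ↔ ∃ n, g ∈ zpowers (x n) := Iff.rfl

lemma towerSub_infinite (hp : p.Prime) {x : ℕ → G} (hx : IsTower p x) :
    ((towerSub hx : Subgroup G) : Set G).Infinite := by
  refine Set.infinite_of_injective_forall_mem (f := fun n : ℕ => x n) ?_
    (fun n => ⟨n, mem_zpowers (x n)⟩)
  intro n m hnm
  simp only at hnm
  have : p ^ n = p ^ m := by rw [← hx.1 n, ← hx.1 m, hnm]
  exact Nat.pow_right_injective hp.two_le this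

lemma tower_mem_of_infinite (hp : p.Prime) (hG : IsPGroup p G) {N : ℕ}
    (hN : ∀ s : Finset G, IsIndepSet (powerGraph G) ↑s → s.card ≤ N)
    {x : ℕ → G} (hx : IsTower p x) {K : Subgroup G} (hK : K ≤ towerSub hx)
    (hinf : (K : Set G).Infinite) : ∀ n, x n ∈ K := by
  intro n
  have hbig : ∃ g : G, g ∈ K ∧ p ^ n < orderOf g := by
    by_contra hcon
    push_neg at hcon
    exact hinf (Set.Finite.subset (boundedOrder_finite hp hG hN (p ^ n))
      fun g hg => hcon g hg)
  obtain ⟨g, hgK, hgord⟩ := hbig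
  obtain ⟨m, hm⟩ := ord_pow_p hp hG g
  have hnm : n < m := by
    rw [hm] at hgord
    exact (Nat.pow_lt_pow_iff_right hp.one_lt).mp hgord
  obtain ⟨M, hgM⟩ := hK hgK
  have hmM : m ≤ M := by
    have := orderOf_dvd_of_mem_zpowers hgM
    rw [hm, hx.1 M] at this
    exact (Nat.pow_dvd_pow_iff_le_right hp.one_lt).mp this
  have hxm : x m ∈ zpowers g := by
    have h1 : x m ∈ zpowers (x M) := tower_le hx hmM (mem_zpowers (x m))
    have h2 := zpowers_eq_of_same hp hG h1 hgM (by rw [hx.1 m, hm])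
    exact h2 ▸ mem_zpowers (x m)
  have hxmK : x m ∈ K := zpowers_le.mpr hgK hxm
  have := tower_pow hx (m - n) n
  rw [show n + (m - n) = m by omega] at this
  exact this ▸ pow_mem hxmK _

lemma towers_inter_finite (hp : p.Prime) (hG : IsPGroup p G) {N : ℕ}
    (hN : ∀ s : Finset G, IsIndepSet (powerGraph G) ↑s → s.card ≤ N)
    {x y : ℕ → G} (hx : IsTower p x) (hy : IsTower p y) {g : G}
    (hgy : g ∈ towerSub hy) (hgx : g ∉ towerSub hx) :
    ((towerSub hx : Set G) ∩ (towerSub hy : Set G)).Finite := by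
  by_contra hinf
  replace hinf : ((towerSub hx : Set G) ∩ (towerSub hy : Set G)).Infinite := hinf
  have hKset : (((towerSub hx ⊓ towerSub hy : Subgroup G)) : Set G) =
      (towerSub hx : Set G) ∩ (towerSub hy : Set G) := rfl
  have hmem := tower_mem_of_infinite hp hG hN hy
    (inf_le_right : towerSub hx ⊓ towerSub hy ≤ towerSub hy) (hKset ▸ hinf)
  obtain ⟨n, hgn⟩ := hgy
  have : y n ∈ towerSub hx := (hmem n).1
  exact hgx (zpowers_le.mpr this hgn)

lemma tower_from (hp : p.Prime) (hG : IsPGroup p G) {N : ℕ}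
    (hN : ∀ s : Finset G, IsIndepSet (powerGraph G) ↑s → s.card ≤ N)
    {a : G} (hg : Good p a) : ∃ (x : ℕ → G) (hx : IsTower p x), a ∈ towerSub hx := by
  obtain ⟨k, hk⟩ := ord_pow_p hp hG a
  let step : {b : G // Good p b} → {b : G // Good p b} := fun b =>
    ⟨(up hp hG hN b.2).choose, (up hp hG hN b.2).choose_spec.2.2⟩
  let u : ℕ → {b : G // Good p b} := fun m => step^[m] ⟨a, hg⟩
  have hstep : ∀ m, (u (m + 1)).1 ^ p = (u m).1 := by
    intro m
    show ((step^[m + 1] ⟨a, hg⟩ : {b : G // Good p b}) : G) ^ p = _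
    rw [Function.iterate_succ_apply']
    exact (up hp hG hN (u m).2).choose_spec.1
  have hordu : ∀ m, orderOf (u m).1 = p ^ (k + m) := by
    intro m
    induction m with
    | zero => exact hk
    | succ m ih =>
      have : orderOf (u (m + 1)).1 = p * orderOf (u m).1 := by
        show orderOf ((step^[m + 1] ⟨a, hg⟩ : {b : G // Good p b}) : G) = _
        rw [Function.iterate_succ_apply']
        exact (up hp hG hN (u m).2).choose_spec.2.1
      rw [this, ih, ← pow_succ']
      congr 1
  classical
  set x : ℕ → G := fun n => if n ≤ k then a ^ p ^ (k - n) else (u (n - k)).1 with hxdef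
  have hxk : x k = a := by simp [hxdef]
  have hxtower : IsTower p x := by
    constructor
    · intro n
      by_cases hnk : n ≤ k
      · simp only [hxdef, if_pos hnk]
        exact ord_can hp hk hnk
      · simp only [hxdef, if_neg hnk]
        rw [hordu (n - k)]
        congr 1
        omega
    · intro n
      by_cases h1 : n + 1 ≤ k
      · have h0 : n ≤ k := by omega
        simp only [hxdef, if_pos h1, if_pos h0]
        rw [← pow_mul, ← pow_succ]
        congr 2
        omega
      · by_cases h0 : n ≤ k
        · have hnk : n = k := by omega
          subst hnk
          simp only [hxdef, if_neg h1, if_pos le_rfl]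
          rw [show n + 1 - n = 1 by omega, show n - n = 0 by omega, pow_zero, pow_one]
          exact hstep 0
        · simp only [hxdef, if_neg h1, if_neg h0]
          rw [show n + 1 - k = (n - k) + 1 by omega]
          exact hstep (n - k)
  exact ⟨x, hxtower, ⟨k, hxk ▸ mem_zpowers (x k)⟩⟩


lemma towerSub_congr {x y : ℕ → G} (h : x = y) (hx : IsTower p x) (hy : IsTower p y) :
    towerSub hx = towerSub hy := by subst h; rfl

lemma pow_lt_self_of_prime (hp : p.Prime) (c : ℕ) : c < p ^ (c + 1) :=
  lt_trans (Nat.lt_pow_self hp.one_lt : c < p ^ c) (Nat.pow_lt_pow_right hp.one_lt (by omega))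

/-- Neumann-type lemma: finitely many towers with pairwise finite intersections
cannot cover the group. -/
lemma exists_outside (hp : p.Prime) (hG : IsPGroup p G) {N : ℕ}
    (hN : ∀ s : Finset G, IsIndepSet (powerGraph G) ↑s → s.card ≤ N)
    {r : ℕ} (hr : 2 ≤ r) (xs : Fin r → ℕ → G) (hxs : ∀ i, IsTower p (xs i))
    (hpair : Pairwise fun i j =>
      ((towerSub (hxs i) : Set G) ∩ (towerSub (hxs j) : Set G)).Finite) :
    ∃ g : G, ∀ i, g ∉ towerSub (hxs i) := by
  classical
  by_contra hcov
  push_neg at hcov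
  set S : Fin r × Fin r → Set G := fun ij =>
    if ij.1 = ij.2 then ∅ else ((towerSub (hxs ij.1) : Set G) ∩ (towerSub (hxs ij.2) : Set G))
    with hS
  set T : Set G := ⋃ ij, S ij with hTdef
  have hT : T.Finite := by
    refine Set.finite_iUnion fun ij => ?_
    by_cases h : ij.1 = ij.2
    · simp [hS, h]
    · simpa [hS, h] using hpair h
  have hmemT : ∀ (i j : Fin r), i ≠ j → ∀ g : G,
      g ∈ towerSub (hxs i) → g ∈ towerSub (hxs j) → g ∈ T := by
    intro i j hij g h1 h2
    refine Set.mem_iUnion.mpr ⟨(i, j), ?_⟩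
    simp only [hS, if_neg hij]
    exact ⟨h1, h2⟩
  obtain ⟨c, hc⟩ : ∃ c : ℕ, ∀ g ∈ T, orderOf g ≤ c := by
    obtain ⟨c, hc⟩ := (hT.image orderOf).bddAbove
    exact ⟨c, fun g hg => hc (Set.mem_image_of_mem _ hg)⟩
  set e := c + r + 1 with he
  set i0 : Fin r := ⟨0, by omega⟩ with hi0
  set i1 : Fin r := ⟨1, by omega⟩ with hi1
  have hi01 : i1 ≠ i0 := by
    simp only [hi0, hi1, ne_eq, Fin.mk.injEq]
    omega
  set a := xs i0 e with ha
  set b := xs i1 e with hb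
  have haH : a ∈ towerSub (hxs i0) := ⟨e, mem_zpowers _⟩
  have hbH : b ∈ towerSub (hxs i1) := ⟨e, mem_zpowers _⟩
  have hborder : orderOf b = p ^ e := (hxs i1).1 e
  have haorder : orderOf a = p ^ e := (hxs i0).1 e
  have key : ∀ t s : Fin (r + 1), (s : ℕ) < (t : ℕ) →
      ∀ i : Fin r, a ^ (t : ℕ) * b ∈ towerSub (hxs i) →
      a ^ (s : ℕ) * b ∈ towerSub (hxs i) → False := by
    intro t s hst i h1 h2
    set d := (t : ℕ) - (s : ℕ) with hd
    have hd0 : d ≠ 0 := by omega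
    have hdr : d ≤ r := by
      have := t.2
      omega
    have hadH : a ^ d ∈ towerSub (hxs i) := by
      have heq : a ^ d = (a ^ (t : ℕ) * b) * (a ^ (s : ℕ) * b)⁻¹ := by
        rw [mul_inv_rev, show (t : ℕ) = d + (s : ℕ) by omega, pow_add]
        group
      rw [heq]
      exact mul_mem h1 (inv_mem h2)
    have hadH0 : a ^ d ∈ towerSub (hxs i0) := pow_mem haH d
    -- orderOf (a ^ d) > c
    have hoad : c < orderOf (a ^ d) := by
      rw [orderOf_pow' a hd0, haorder]
      obtain ⟨i', hi'le, hi'eq⟩ := (Nat.dvd_prime_pow hp).mp (Nat.gcd_dvd_left (p ^ e) d)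
      rw [hi'eq, Nat.pow_div hi'le hp.pos]
      have h1' : p ^ i' ≤ d := hi'eq ▸ Nat.gcd_le_right _ (by omega)
      have h2' : i' < p ^ i' := Nat.lt_pow_self hp.one_lt
      have h3' : i' ≤ r := by omega
      have h4' : c + 1 ≤ e - i' := by omega
      calc c < p ^ (c + 1) := pow_lt_self_of_prime hp c
        _ ≤ p ^ (e - i') := Nat.pow_le_pow_right hp.pos h4'
    by_cases hii0 : i = i0
    · have hbH0 : b ∈ towerSub (hxs i) := by
        have hbeq : b = (a ^ (s : ℕ))⁻¹ * (a ^ (s : ℕ) * b) := by group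
        rw [hbeq]
        refine mul_mem (inv_mem (pow_mem ?_ _)) h2
        rw [hii0]
        exact haH
      have := hc b (hmemT i1 i (by rw [hii0]; exact hi01) b hbH hbH0)
      rw [hborder] at this
      have := pow_lt_self_of_prime hp c
      have : p ^ (c + 1) ≤ p ^ e := Nat.pow_le_pow_right hp.pos (by omega)
      omega
    · have := hc _ (hmemT i0 i (Ne.symm hii0) _ hadH0 hadH)
      omega
  obtain ⟨t, s, hts, hFts⟩ := Fintype.exists_ne_map_eq_of_card_lt
    (fun t : Fin (r + 1) => (hcov (a ^ (t : ℕ) * b)).choose) (by simp)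
  rcases Nat.lt_or_ge (s : ℕ) (t : ℕ) with h | h
  · exact key t s h _ (hcov (a ^ (t : ℕ) * b)).choose_spec
      (hFts ▸ (hcov (a ^ (s : ℕ) * b)).choose_spec)
  · have hst : (t : ℕ) < (s : ℕ) := by
      rcases Nat.lt_or_ge (t : ℕ) (s : ℕ) with h' | h'
      · exact h'
      · exact absurd (Fin.ext (by omega)) hts
    exact key s t hst _ (hcov (a ^ (s : ℕ) * b)).choose_spec
      (hFts ▸ (hcov (a ^ (t : ℕ) * b)).choose_spec)

lemma extend (hp : p.Prime) (hG : IsPGroup p G) {N : ℕ}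
    (hN : ∀ s : Finset G, IsIndepSet (powerGraph G) ↑s → s.card ≤ N)
    {r : ℕ} (hr : 0 < r) (xs : Fin r → ℕ → G) (hxs : ∀ i, IsTower p (xs i))
    (hpair : Pairwise fun i j =>
      ((towerSub (hxs i) : Set G) ∩ (towerSub (hxs j) : Set G)).Finite)
    (hout : ∃ g : G, ∀ i, g ∉ towerSub (hxs i)) :
    ∃ (y : ℕ → G) (hy : IsTower p y), ∀ i,
      ((towerSub hy : Set G) ∩ (towerSub (hxs i) : Set G)).Finite := by
  obtain ⟨g, hgout⟩ := hout
  set i0 : Fin r := ⟨0, hr⟩ with hi0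
  set C : Set G := (fun h => g * h) '' (towerSub (hxs i0) : Set G) with hC
  have hCinf : C.Infinite :=
    (towerSub_infinite hp (hxs i0)).image ((mul_right_injective g).injOn)
  have hCH : ∀ i, (C ∩ (towerSub (hxs i) : Set G)).Finite := by
    intro i
    rcases Set.eq_empty_or_nonempty (C ∩ (towerSub (hxs i) : Set G)) with hne | hne
    · rw [hne]; exact Set.finite_empty
    obtain ⟨u, huC, huH⟩ := hne
    have hii0 : i ≠ i0 := by
      rintro rfl
      obtain ⟨h0, hh0, rfl⟩ := huC
      refine hgout i0 ?_
      have hgeq : g = (g * h0) * h0⁻¹ := by group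
      rw [hgeq]
      exact mul_mem huH (inv_mem hh0)
    have hfin : ((towerSub (hxs i0) : Set G) ∩ (towerSub (hxs i) : Set G)).Finite :=
      hpair (Ne.symm hii0)
    refine Set.Finite.subset (hfin.image (fun w => u * w)) ?_
    rintro v ⟨hvC, hvH⟩
    refine ⟨u⁻¹ * v, ⟨?_, mul_mem (inv_mem huH) hvH⟩, by group⟩
    obtain ⟨hu', hhu', rfl⟩ := huC
    obtain ⟨hv', hhv', rfl⟩ := hvC
    have heq : (g * hu')⁻¹ * (g * hv') = hu'⁻¹ * hv' := by group
    rw [heq]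
    exact mul_mem (inv_mem hhu') hhv'
  have hbad := bad_finite hp hG hN
  have hUfin : ((⋃ i, (C ∩ (towerSub (hxs i) : Set G))) ∪ {a : G | ¬ Good p a}).Finite :=
    (Set.finite_iUnion hCH).union hbad
  obtain ⟨g', hg'C, hg'no⟩ := (hCinf.diff hUfin).nonempty
  have hg'good : Good p g' := by
    by_contra hbadg
    exact hg'no (Set.mem_union_right _ hbadg)
  have hg'out : ∀ i, g' ∉ towerSub (hxs i) := fun i hmem =>
    hg'no (Set.mem_union_left _ (Set.mem_iUnion.mpr ⟨i, hg'C, hmem⟩))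
  obtain ⟨y, hy, hgy'⟩ := tower_from hp hG hN hg'good
  refine ⟨y, hy, fun i => ?_⟩
  rw [Set.inter_comm]
  exact towers_inter_finite hp hG hN (hxs i) hy hgy' (hg'out i)

/-- Main contradiction: if some element escapes a tower, the independence number blows up. -/
lemma no_escape (hp : p.Prime) (hG : IsPGroup p G) {N : ℕ}
    (hN : ∀ s : Finset G, IsIndepSet (powerGraph G) ↑s → s.card ≤ N)
    {x0 : ℕ → G} (hx0 : IsTower p x0) (g : G) (hgout : g ∉ towerSub hx0) : False := by
  classical
  have key : ∀ r : ℕ, ∃ (xs : Fin (r + 1) → ℕ → G) (hxs : ∀ i, IsTower p (xs i)),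
      (Pairwise fun i j =>
        ((towerSub (hxs i) : Set G) ∩ (towerSub (hxs j) : Set G)).Finite) ∧
      ∃ g' : G, ∀ i, g' ∉ towerSub (hxs i) := by
    intro r
    induction r with
    | zero =>
      refine ⟨fun _ => x0, fun _ => hx0, fun i j hij => (hij (Fin.ext (by omega))).elim,
        g, fun i => hgout⟩
    | succ r ih =>
      obtain ⟨xs, hxs, hpair, hout⟩ := ih
      obtain ⟨y, hy, hyfin⟩ := extend hp hG hN (by omega) xs hxs hpair hout
      set xs' : Fin (r + 2) → ℕ → G := Fin.snoc xs y with hxs'def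
      have hcast : ∀ j : Fin (r + 1), xs' j.castSucc = xs j := fun j => Fin.snoc_castSucc _ _ _
      have hlast : xs' (Fin.last (r + 1)) = y := Fin.snoc_last _ _
      have hxs' : ∀ i, IsTower p (xs' i) := by
        intro i
        induction i using Fin.lastCases with
        | last => rw [hlast]; exact hy
        | cast j => rw [hcast j]; exact hxs j
      have hsetc : ∀ j : Fin (r + 1),
          ((towerSub (hxs' j.castSucc) : Subgroup G) : Set G) = towerSub (hxs j) :=
        fun j => congrArg _ (towerSub_congr (hcast j) _ _)
      have hsetl : ((towerSub (hxs' (Fin.last (r + 1))) : Subgroup G) : Set G) = towerSub hy :=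
        congrArg _ (towerSub_congr hlast _ _)
      have hpair' : Pairwise fun i j =>
          ((towerSub (hxs' i) : Set G) ∩ (towerSub (hxs' j) : Set G)).Finite := by
        intro i j hij
        induction i using Fin.lastCases with
        | last =>
          induction j using Fin.lastCases with
          | last => exact (hij rfl).elim
          | cast j' => rw [hsetl, hsetc j']; exact hyfin j'
        | cast i' =>
          induction j using Fin.lastCases with
          | last => rw [hsetl, hsetc i', Set.inter_comm]; exact hyfin i'
          | cast j' =>
            rw [hsetc i', hsetc j']
            refine hpair fun hii => hij ?_
            rw [hii]
      obtain ⟨g'', hg''⟩ := exists_outside hp hG hN (by omega) xs' hxs' hpair'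
      exact ⟨xs', hxs', hpair', g'', hg''⟩
  obtain ⟨xs, hxs, hpair, -⟩ := key N
  -- build an independent set of size N + 1
  set S : Fin (N + 1) × Fin (N + 1) → Set G := fun ij =>
    if ij.1 = ij.2 then ∅
    else ((towerSub (hxs ij.1) : Set G) ∩ (towerSub (hxs ij.2) : Set G)) with hS
  have hT : (⋃ ij, S ij).Finite := by
    refine Set.finite_iUnion fun ij => ?_
    by_cases h : ij.1 = ij.2
    · simp [hS, h]
    · simpa [hS, h] using hpair h
  have hmemT : ∀ (i j : Fin (N + 1)), i ≠ j → ∀ a : G,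
      a ∈ towerSub (hxs i) → a ∈ towerSub (hxs j) → a ∈ ⋃ ij, S ij := by
    intro i j hij a h1 h2
    refine Set.mem_iUnion.mpr ⟨(i, j), ?_⟩
    simp only [hS, if_neg hij]
    exact ⟨h1, h2⟩
  obtain ⟨c, hc⟩ : ∃ c : ℕ, ∀ a ∈ ⋃ ij, S ij, orderOf a ≤ c := by
    obtain ⟨c, hc⟩ := (hT.image orderOf).bddAbove
    exact ⟨c, fun a ha => hc (Set.mem_image_of_mem _ ha)⟩
  set gi : Fin (N + 1) → G := fun i => xs i (c + 1) with hgi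
  have hgiH : ∀ i, gi i ∈ towerSub (hxs i) := fun i => ⟨c + 1, mem_zpowers _⟩
  have hgiord : ∀ i, orderOf (gi i) = p ^ (c + 1) := fun i => (hxs i).1 (c + 1)
  have hbig : ∀ i, c < orderOf (gi i) := by
    intro i
    rw [hgiord i]
    exact pow_lt_self_of_prime hp c
  have hnc : ∀ i j, i ≠ j → ¬ Cmp (gi i) (gi j) := by
    intro i j hij hcmp
    rcases hcmp with hcm | hcm
    · have h1 : gi i ∈ towerSub (hxs j) := zpowers_le.mpr (hgiH j) hcm
      have := hc _ (hmemT i j hij _ (hgiH i) h1)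
      have := hbig i
      omega
    · have h1 : gi j ∈ towerSub (hxs i) := zpowers_le.mpr (hgiH i) hcm
      have := hc _ (hmemT j i (Ne.symm hij) _ (hgiH j) h1)
      have := hbig j
      omega
  have hginj : Function.Injective gi := by
    intro i j hij
    by_contra hne
    exact hnc i j hne (hij ▸ cmp_self (gi i))
  set s : Finset G := Finset.image gi Finset.univ with hs
  have hcard : s.card = N + 1 := by
    rw [hs, Finset.card_image_of_injective _ hginj, Finset.card_univ, Fintype.card_fin]
  have hindep : IsIndepSet (powerGraph G) ↑s := by
    refine indep_of_pairwise hp hG ?_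
    intro a ha b hb hab
    simp only [hs, Finset.coe_image, Finset.coe_univ, Set.image_univ, Set.mem_range] at ha hb
    obtain ⟨i, rfl⟩ := ha
    obtain ⟨j, rfl⟩ := hb
    exact hnc i j (fun hijeq => hab (by rw [hijeq]))
  have := hN s hindep
  omega


lemma mem_zmul_one_iff (q : ℚ) :
    q ∈ AddSubgroup.zmultiples (1 : ℚ) ↔ ∃ z : ℤ, (z : ℚ) = q := by
  rw [AddSubgroup.mem_zmultiples_iff]
  simp [zsmul_eq_mul]

def eFrac (hp : p.Prime) (n : ℕ) (k : ℤ) : pruferGroup p :=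
  ⟨QuotientAddGroup.mk ((k : ℚ) / (p : ℚ) ^ n), by
    refine ⟨n, ?_⟩
    have hp0 : ((p : ℚ)) ^ n ≠ 0 := pow_ne_zero _ (Nat.cast_ne_zero.mpr hp.pos.ne')
    have h2 : (p ^ n : ℕ) • ((k : ℚ) / (p : ℚ) ^ n) = (k : ℚ) := by
      rw [nsmul_eq_mul]
      push_cast
      field_simp
    show (p ^ n : ℕ) • (QuotientAddGroup.mk' (AddSubgroup.zmultiples (1:ℚ))
        ((k : ℚ) / (p : ℚ) ^ n)) = 0
    rw [← map_nsmul, h2, QuotientAddGroup.mk'_apply, QuotientAddGroup.eq_zero_iff]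
    exact (mem_zmul_one_iff _).mpr ⟨k, rfl⟩⟩

lemma eFrac_add (hp : p.Prime) (n : ℕ) (k j : ℤ) :
    eFrac hp n k + eFrac hp n j = eFrac hp n (k + j) := by
  apply Subtype.ext
  show QuotientAddGroup.mk _ + QuotientAddGroup.mk _ = QuotientAddGroup.mk _
  rw [← QuotientAddGroup.mk_add]
  congr 1
  push_cast
  rw [add_div]

lemma eFrac_eq_iff (hp : p.Prime) {n m : ℕ} (h : n ≤ m) (k j : ℤ) :
    eFrac hp n k = eFrac hp m j ↔ (p : ℤ) ^ m ∣ k * (p : ℤ) ^ (m - n) - j := by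
  obtain ⟨d, rfl⟩ : ∃ d, m = n + d := ⟨m - n, by omega⟩
  rw [show n + d - n = d by omega]
  have hp0 : ((p : ℚ)) ≠ 0 := Nat.cast_ne_zero.mpr hp.pos.ne'
  have hcalc : (k : ℚ) / (p : ℚ) ^ n - (j : ℚ) / (p : ℚ) ^ (n + d) =
      ((k * (p : ℤ) ^ d - j : ℤ) : ℚ) / (p : ℚ) ^ (n + d) := by
    field_simp
    push_cast
    ring
  rw [Subtype.ext_iff]
  show (QuotientAddGroup.mk _ : ℚ ⧸ AddSubgroup.zmultiples (1:ℚ)) = QuotientAddGroup.mk _ ↔ _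
  rw [QuotientAddGroup.eq_iff_sub_mem, hcalc, mem_zmul_one_iff]
  constructor
  · rintro ⟨z, hz⟩
    rw [eq_div_iff (by positivity)] at hz
    refine ⟨z, ?_⟩
    have h2 : ((k * (p : ℤ) ^ d - j : ℤ) : ℚ) = (((p : ℤ) ^ (n + d) * z : ℤ) : ℚ) := by
      push_cast at hz ⊢
      linarith [hz]
    exact_mod_cast h2
  · rintro ⟨z, hz⟩
    refine ⟨z, ?_⟩
    rw [eq_div_iff (by positivity)]
    push_cast [hz]
    ring

lemma pow_eq_iff (hp : p.Prime) {x : ℕ → G} (hx : IsTower p x) {n m : ℕ} (h : n ≤ m)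
    (k j : ℤ) : x n ^ k = x m ^ j ↔ (p : ℤ) ^ m ∣ k * (p : ℤ) ^ (m - n) - j := by
  have hxn : x n = x m ^ ((p ^ (m - n) : ℕ) : ℤ) := by
    have h1 := tower_pow hx (m - n) n
    rw [show n + (m - n) = m by omega] at h1
    rw [← h1, zpow_natCast]
  rw [hxn, ← zpow_mul, zpow_eq_zpow_iff_modEq, Int.modEq_iff_dvd, hx.1 m]
  rw [show ((p ^ m : ℕ) : ℤ) = (p : ℤ) ^ m by push_cast; rfl]
  rw [show j - ((p ^ (m - n) : ℕ) : ℤ) * k = -(k * (p : ℤ) ^ (m - n) - j) by push_cast; ring]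
  rw [dvd_neg]

lemma rep_eq_iff (hp : p.Prime) {x : ℕ → G} (hx : IsTower p x) (n m : ℕ) (k j : ℤ) :
    x n ^ k = x m ^ j ↔ eFrac hp n k = eFrac hp m j := by
  rcases le_total n m with h | h
  · rw [pow_eq_iff hp hx h, eFrac_eq_iff hp h]
  · rw [eq_comm, pow_eq_iff hp hx h,
      show (eFrac hp n k = eFrac hp m j) ↔ (eFrac hp m j = eFrac hp n k) from eq_comm,
      eFrac_eq_iff hp h]

lemma iso_of_cover (hp : p.Prime) {x : ℕ → G} (hx : IsTower p x)
    (hcov : ∀ g : G, g ∈ towerSub hx) :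
    Nonempty (G ≃* Multiplicative (pruferGroup p)) := by
  classical
  have hrep : ∀ g : G, ∃ nk : ℕ × ℤ, x nk.1 ^ nk.2 = g := by
    intro g
    obtain ⟨n, hn⟩ := hcov g
    obtain ⟨k, hk⟩ := mem_zpowers_iff.mp hn
    exact ⟨(n, k), hk⟩
  choose rep hrepspec using hrep
  set φ : G → Multiplicative (pruferGroup p) :=
    fun g => Multiplicative.ofAdd (eFrac hp (rep g).1 (rep g).2) with hφ
  have hφval : ∀ (g : G) (n : ℕ) (k : ℤ), x n ^ k = g →
      φ g = Multiplicative.ofAdd (eFrac hp n k) := by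
    intro g n k hk
    have h1 := (rep_eq_iff hp hx (rep g).1 n (rep g).2 k).mp ((hrepspec g).trans hk.symm)
    rw [hφ]
    exact congrArg _ h1
  have hconv : ∀ (n m : ℕ) (k : ℤ), n ≤ m → x m ^ (k * (p : ℤ) ^ (m - n)) = x n ^ k := by
    intro n m k hnm
    have hxn : x n = x m ^ ((p ^ (m - n) : ℕ) : ℤ) := by
      have h1 := tower_pow hx (m - n) n
      rw [show n + (m - n) = m by omega] at h1
      rw [← h1, zpow_natCast]
    rw [hxn, ← zpow_mul, mul_comm]
    congr 1
  have hmul : ∀ a b : G, φ (a * b) = φ a * φ b := by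
    intro a b
    set na := (rep a).1 with hna'
    set ka := (rep a).2 with hka'
    set nb := (rep b).1 with hnb'
    set kb := (rep b).2 with hkb'
    have hra : x na ^ ka = a := hrepspec a
    have hrb : x nb ^ kb = b := hrepspec b
    set m := max na nb with hm
    have ha' : x m ^ (ka * (p : ℤ) ^ (m - na)) = a := by
      rw [hconv na m ka (le_max_left _ _), hra]
    have hb' : x m ^ (kb * (p : ℤ) ^ (m - nb)) = b := by
      rw [hconv nb m kb (le_max_right _ _), hrb]
    have hab : x m ^ (ka * (p : ℤ) ^ (m - na) + kb * (p : ℤ) ^ (m - nb)) = a * b := by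
      rw [zpow_add, ha', hb']
    rw [hφval _ _ _ hab, hφval a na ka hra, hφval b nb kb hrb]
    have h1 : eFrac hp m (ka * (p : ℤ) ^ (m - na)) = eFrac hp na ka :=
      (rep_eq_iff hp hx m na _ ka).mp (ha'.trans hra.symm)
    have h2 : eFrac hp m (kb * (p : ℤ) ^ (m - nb)) = eFrac hp nb kb :=
      (rep_eq_iff hp hx m nb _ kb).mp (hb'.trans hrb.symm)
    rw [← h1, ← h2, ← ofAdd_add, eFrac_add]
  have hinj : Function.Injective φ := by
    intro a b hab
    have h1 : eFrac hp (rep a).1 (rep a).2 = eFrac hp (rep b).1 (rep b).2 := by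
      have := congrArg Multiplicative.toAdd hab
      simpa [hφ] using this
    have h2 := (rep_eq_iff hp hx (rep a).1 (rep b).1 (rep a).2 (rep b).2).mpr h1
    rw [hrepspec a, hrepspec b] at h2
    exact h2
  have hsurj : Function.Surjective φ := by
    intro t
    set t' := Multiplicative.toAdd t with ht'
    obtain ⟨n, hn⟩ := t'.2
    obtain ⟨q, hq⟩ := QuotientAddGroup.mk_surjective t'.1
    have hq0 : QuotientAddGroup.mk ((p ^ n : ℕ) • q) = (0 : ℚ ⧸ AddSubgroup.zmultiples (1:ℚ)) := by
      have : (p ^ n : ℕ) • (QuotientAddGroup.mk' (AddSubgroup.zmultiples (1:ℚ)) q) = 0 := by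
        rw [QuotientAddGroup.mk'_apply, hq]
        exact hn
      rw [← this, ← map_nsmul, QuotientAddGroup.mk'_apply]
    obtain ⟨z, hz⟩ := (mem_zmul_one_iff _).mp ((QuotientAddGroup.eq_zero_iff _).mp hq0)
    have hp0 : ((p : ℚ)) ^ n ≠ 0 := pow_ne_zero _ (Nat.cast_ne_zero.mpr hp.pos.ne')
    have hqz : q = (z : ℚ) / (p : ℚ) ^ n := by
      rw [eq_div_iff hp0]
      rw [nsmul_eq_mul] at hz
      push_cast at hz ⊢
      linarith [hz]
    have htz : t' = eFrac hp n z := by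
      apply Subtype.ext
      show t'.1 = QuotientAddGroup.mk ((z : ℚ) / (p : ℚ) ^ n)
      rw [← hq, hqz]
    refine ⟨x n ^ z, ?_⟩
    rw [hφval (x n ^ z) n z rfl, ← htz, ht']
    rfl
  exact ⟨MulEquiv.ofBijective (MonoidHom.mk' φ hmul) ⟨hinj, hsurj⟩⟩
end PGP

theorem pGroup_finite_independence_number (p : ℕ) (hp : p.Prime) (G : Type*) [Group G]
    (hG : IsPGroup p G)
    (h : ∃ N : ℕ, ∀ s : Finset G, IsIndepSet (powerGraph G) ↑s → s.card ≤ N) :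
    Finite G ∨ Nonempty (G ≃* Multiplicative (pruferGroup p)) := by
  obtain ⟨N, hN⟩ := h
  by_cases hfin : Finite G
  · exact Or.inl hfin
  · right
    have : Infinite G := not_finite_iff_infinite.mp hfin
    have hg1 : PGP.Good p (1 : G) := PGP.good_one hp hG hN
    obtain ⟨x, hx, -⟩ := PGP.tower_from hp hG hN hg1
    by_cases hcov : ∀ g : G, g ∈ PGP.towerSub hx
    · exact PGP.iso_of_cover hp hx hcov
    · push_neg at hcov
      obtain ⟨g, hg⟩ := hcov
      exact (PGP.no_escape hp hG hN hx g hg).elim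
end

section
/- For any group G, every clique in the power graph of G is at most countably infinite. -/
theorem powerGraph_clique_countable (G : Type*) [Group G]
    (s : Set G) (hs : (powerGraph G).IsClique s) : s.Countable := by
  classical
  set T : Set G := {y | y ∈ s ∧ IsOfFinOrder y} with hT
  set N : Set G := {y | y ∈ s ∧ ¬ IsOfFinOrder y} with hN
  have hsub : s ⊆ T ∪ N := by
    intro y hy
    by_cases h : IsOfFinOrder y
    · exact Or.inl ⟨hy, h⟩
    · exact Or.inr ⟨hy, h⟩
  -- torsion part
  have hTc : T.Countable := by
    have : T ⊆ ⋃ n : ℕ, {y | y ∈ s ∧ IsOfFinOrder y ∧ orderOf y = n} := by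
      intro y hy
      exact Set.mem_iUnion.2 ⟨orderOf y, hy.1, hy.2, rfl⟩
    refine Set.Countable.mono this (Set.countable_iUnion fun n => ?_)
    rcases Set.eq_empty_or_nonempty {y | y ∈ s ∧ IsOfFinOrder y ∧ orderOf y = n} with he | ⟨y₀, hy₀⟩
    · rw [he]; exact Set.countable_empty
    · have hfin : (Subgroup.zpowers y₀ : Set G).Finite := finite_zpowers.2 hy₀.2.1
      refine Set.Countable.mono ?_ hfin.countable
      intro y hy
      by_cases hne : y = y₀
      · subst hne; exact Subgroup.mem_zpowers y
      · rcases hs hy.1 hy₀.1 hne with ⟨_, m, hm | hm⟩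
        · -- y₀ = y ^ m : zpowers y₀ ≤ zpowers y with equal cards
          have hle : Subgroup.zpowers y₀ ≤ Subgroup.zpowers y := by
            rw [Subgroup.zpowers_le]
            exact hm ▸ Subgroup.pow_mem _ (Subgroup.mem_zpowers y) m
          have : Finite (Subgroup.zpowers y) := (finite_zpowers.2 hy.2.1).to_subtype
          have hcard : Nat.card (Subgroup.zpowers y) ≤ Nat.card (Subgroup.zpowers y₀) := by
            rw [Nat.card_zpowers, Nat.card_zpowers, hy.2.2, hy₀.2.2]
          have heq := Subgroup.eq_of_le_of_card_ge hle hcard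
          rw [heq]
          exact Subgroup.mem_zpowers y
        · exact hm ▸ Subgroup.pow_mem _ (Subgroup.mem_zpowers y₀) m
  -- non-torsion part
  have hNc : N.Countable := by
    rcases Set.eq_empty_or_nonempty N with he | ⟨x, hx⟩
    · rw [he]; exact Set.countable_empty
    · have hsub2 : N ⊆ Set.range (fun n : ℕ => x ^ n) ∪
          ⋃ n : ℕ, {y | y ∈ s ∧ ¬ IsOfFinOrder y ∧ x = y ^ n} := by
        intro y hy
        by_cases hne : y = x
        · exact Or.inl ⟨1, by simp [hne]⟩
        · rcases hs hy.1 hx.1 hne with ⟨_, m, hm | hm⟩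
          · exact Or.inr (Set.mem_iUnion.2 ⟨m, hy.1, hy.2, hm⟩)
          · exact Or.inl ⟨m, hm.symm⟩
      refine Set.Countable.mono hsub2 (Set.Countable.union (Set.countable_range _)
        (Set.countable_iUnion fun n => ?_))
      -- each root set is a subsingleton
      apply Set.Subsingleton.countable
      intro y hy z hz
      by_contra hne
      have hninj : Function.Injective fun k : ℕ => y ^ k :=
        injective_pow_iff_not_isOfFinOrder.2 hy.2.1
      have hninj' : Function.Injective fun k : ℕ => z ^ k :=
        injective_pow_iff_not_isOfFinOrder.2 hz.2.1
      have hn0 : n ≠ 0 := by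
        intro h0
        apply hx.2
        have : x = 1 := by rw [hy.2.2, h0, pow_zero]
        rw [this]; exact IsOfFinOrder.one
      rcases hs hy.1 hz.1 hne with ⟨_, m, hm | hm⟩
      · -- z = y ^ m
        have : y ^ (m * n) = y ^ n := by
          rw [pow_mul, ← hm, ← hy.2.2, hz.2.2]
        have hmn : m * n = n := hninj this
        have hm1 : m = 1 := by
          rcases Nat.eq_zero_or_pos n with h | h
          · exact absurd h hn0
          · exact Nat.eq_of_mul_eq_mul_right h (by rw [hmn, one_mul])
        exact hne (by rw [hm, hm1, pow_one])
      · -- y = z ^ m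
        have : z ^ (m * n) = z ^ n := by
          rw [pow_mul, ← hm, ← hz.2.2, hy.2.2]
        have hmn : m * n = n := hninj' this
        have hm1 : m = 1 := by
          rcases Nat.eq_zero_or_pos n with h | h
          · exact absurd h hn0
          · exact Nat.eq_of_mul_eq_mul_right h (by rw [hmn, one_mul])
        exact hne (by rw [hm, hm1, pow_one])
  exact Set.Countable.mono hsub (hTc.union hNc)
end

section
/- Let P be a pre-ordered set in which every chain has size at most m, and whose maximum chain size is m. Then the comparability graph of P is perfect, and its clique number and chromatic number both equal m. -/
/-- A graph is perfect if every finite induced subgraph has chromatic number equal to its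
clique number. -/
def SimpleGraph.IsPerfect {V : Type*} (G' : SimpleGraph V) : Prop :=
  ∀ s : Finset V,
    (SimpleGraph.induce (↑s : Set V) G').chromaticNumber =
      ((SimpleGraph.induce (↑s : Set V) G').cliqueNum : ℕ∞)

/-- The comparability graph of a pre-ordered set. -/
def compGraph (P : Type*) [Preorder P] : SimpleGraph P where
  Adj x y := x ≠ y ∧ (x ≤ y ∨ y ≤ x)
  symm := ⟨by rintro x y ⟨h, hc⟩; exact ⟨h.symm, hc.symm⟩⟩
  loopless := ⟨by rintro x ⟨h, _⟩; exact h rfl⟩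

section Aux

variable {Q : Type*} [Preorder Q]

lemma compGraph_clique_iff_chain (S : Set Q) :
    (compGraph Q).IsClique S ↔ IsChain (· ≤ ·) S := by
  constructor <;> intro h x hx y hy hxy
  · exact (h hx hy hxy).2
  · exact ⟨hxy, h hx hy hxy⟩

/-- A strict partial order refining the preorder, breaking ties with a well-order. -/
def prRel (x y : Q) : Prop :=
  (x ≤ y ∧ ¬ y ≤ x) ∨ (x ≤ y ∧ y ≤ x ∧ WellOrderingRel x y)

lemma prRel_le {x y : Q} (h : prRel x y) : x ≤ y := h.elim And.left fun h => h.1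

lemma prRel_trans {x y z : Q} (h1 : prRel x y) (h2 : prRel y z) : prRel x z := by
  rcases h1 with ⟨h1a, h1b⟩ | ⟨h1a, h1b, h1c⟩ <;>
    rcases h2 with ⟨h2a, h2b⟩ | ⟨h2a, h2b, h2c⟩
  · exact Or.inl ⟨h1a.trans h2a, fun h => h1b (h2a.trans h)⟩
  · exact Or.inl ⟨h1a.trans h2a, fun h => h1b (h2a.trans h)⟩
  · exact Or.inl ⟨h1a.trans h2a, fun h => h2b (h.trans h1a)⟩
  · exact Or.inr ⟨h1a.trans h2a, h2b.trans h1b, _root_.trans_of WellOrderingRel h1c h2c⟩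

lemma prRel_irrefl (x : Q) : ¬ prRel x x := by
  rintro (⟨h1, h2⟩ | ⟨_, _, h3⟩)
  · exact h2 h1
  · exact _root_.irrefl_of WellOrderingRel x h3

lemma prRel_asymm {x y : Q} (h1 : prRel x y) (h2 : prRel y x) : False :=
  prRel_irrefl x (prRel_trans h1 h2)

lemma prRel_total {x y : Q} (hne : x ≠ y) (h : x ≤ y ∨ y ≤ x) :
    prRel x y ∨ prRel y x := by
  by_cases hxy : x ≤ y <;> by_cases hyx : y ≤ x
  · rcases trichotomous_of WellOrderingRel x y with h1 | h1 | h1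
    · exact Or.inl (Or.inr ⟨hxy, hyx, h1⟩)
    · exact absurd h1 hne
    · exact Or.inr (Or.inr ⟨hyx, hxy, h1⟩)
  · exact Or.inl (Or.inl ⟨hxy, hyx⟩)
  · exact Or.inr (Or.inl ⟨hyx, hxy⟩)
  · rcases h with h | h <;> contradiction

/-- The set of cardinalities of chains ending at `x` (w.r.t. `prRel`). -/
def htSet (x : Q) : Set ℕ :=
  {n | ∃ s : Finset Q, IsChain (· ≤ ·) (↑s : Set Q) ∧ x ∈ s ∧
    (∀ a ∈ s, a = x ∨ prRel a x) ∧ s.card = n}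

lemma one_mem_htSet (x : Q) : 1 ∈ htSet x := by
  refine ⟨{x}, ?_, by simp, by simp, by simp⟩
  intro a ha b hb hab
  simp only [Finset.coe_singleton, Set.mem_singleton_iff] at ha hb
  exact absurd (ha.trans hb.symm) hab

/-- Height of `x`: the largest cardinality of a chain ending at `x`. -/
noncomputable def htFn (x : Q) : ℕ := sSup (htSet x)

section Bound

variable {m : ℕ} (hbound : ∀ s : Finset Q, IsChain (· ≤ ·) (↑s : Set Q) → s.card ≤ m)

include hbound

lemma htSet_bdd (x : Q) : BddAbove (htSet x) := by
  refine ⟨m, ?_⟩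
  rintro n ⟨s, hc, -, -, rfl⟩
  exact hbound s hc

lemma htFn_mem (x : Q) : htFn x ∈ htSet x :=
  Nat.sSup_mem ⟨1, one_mem_htSet x⟩ (htSet_bdd hbound x)

lemma htFn_bounds (x : Q) : 1 ≤ htFn x ∧ htFn x ≤ m := by
  constructor
  · exact le_csSup (htSet_bdd hbound x) (one_mem_htSet x)
  · obtain ⟨s, hc, _, _, hcard⟩ := htFn_mem hbound x
    exact hcard ▸ hbound s hc

lemma htFn_lt {x y : Q} (h : prRel x y) : htFn x < htFn y := by
  classical
  obtain ⟨s, hc, hxs, htop, hcard⟩ := htFn_mem hbound x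
  have hy : y ∉ s := by
    intro hy
    rcases htop y hy with rfl | hyx
    · exact prRel_irrefl y h
    · exact prRel_asymm h hyx
  have hle : ∀ a ∈ s, a ≤ x := fun a ha => (htop a ha).elim (fun h => h ▸ le_refl x)
    prRel_le
  have hmem : htFn x + 1 ∈ htSet y := by
    refine ⟨insert y s, ?_, Finset.mem_insert_self y s, ?_, ?_⟩
    · intro a ha b hb hab
      simp only [Finset.coe_insert, Set.mem_insert_iff, Finset.mem_coe] at ha hb
      rcases ha with rfl | ha <;> rcases hb with rfl | hb
      · exact absurd rfl hab
      · exact Or.inr ((hle b hb).trans ((prRel_le h)))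
      · exact Or.inl ((hle a ha).trans (prRel_le h))
      · exact hc ha hb hab
    · intro a ha
      rcases Finset.mem_insert.1 ha with rfl | ha
      · exact Or.inl rfl
      · rcases htop a ha with rfl | haa
        · exact Or.inr h
        · exact Or.inr (prRel_trans haa h)
    · rw [Finset.card_insert_of_notMem hy, hcard]
  have hfin : htFn x + 1 ≤ htFn y := le_csSup (htSet_bdd hbound y) hmem
  omega

lemma compGraph_colorable : (compGraph Q).Colorable m := by
  rw [SimpleGraph.colorable_iff_exists_bdd_nat_coloring]
  refine ⟨SimpleGraph.Coloring.mk (fun v => htFn v - 1) ?_, ?_⟩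
  · intro v w hadj
    have hv := htFn_bounds hbound v
    have hw := htFn_bounds hbound w
    show htFn v - 1 ≠ htFn w - 1
    rcases prRel_total hadj.1 hadj.2 with h | h <;>
      have := htFn_lt hbound h <;> omega
  · intro v
    have hv := htFn_bounds hbound v
    show htFn v - 1 < m
    omega

lemma compGraph_key (hmax : ∃ s : Finset Q, IsChain (· ≤ ·) (↑s : Set Q) ∧ s.card = m) :
    (compGraph Q).chromaticNumber = (m : ℕ∞) ∧ (compGraph Q).cliqueNum = m := by
  obtain ⟨t, htc, htcard⟩ := hmax
  have hclq : (compGraph Q).IsNClique m t :=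
    ⟨(compGraph_clique_iff_chain (↑t : Set Q)).2 htc, htcard⟩
  have hcol := compGraph_colorable hbound
  have hbdd : BddAbove {n | ∃ s, (compGraph Q).IsNClique n s} := by
    refine ⟨m, ?_⟩
    rintro n ⟨s, hs⟩
    exact hs.2 ▸ hbound s ((compGraph_clique_iff_chain (↑s : Set Q)).1 hs.1)
  constructor
  · refine le_antisymm hcol.chromaticNumber_le ?_
    by_contra h
    push_neg at h
    exact (SimpleGraph.cliqueFree_of_chromaticNumber_lt h) t hclq
  · refine le_antisymm ?_ (le_csSup hbdd ⟨t, hclq⟩)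
    refine csSup_le ⟨m, t, hclq⟩ ?_
    rintro n ⟨s, hs⟩
    exact hs.2 ▸ hbound s ((compGraph_clique_iff_chain (↑s : Set Q)).1 hs.1)

end Bound

end Aux

lemma induce_compGraph_eq (P : Type*) [Preorder P] (S : Set P) :
    SimpleGraph.induce S (compGraph P) = compGraph S := by
  ext x y
  simp only [SimpleGraph.comap_adj, compGraph, Function.Embedding.coe_subtype]
  constructor
  · rintro ⟨h1, h2⟩
    exact ⟨fun h => h1 (congrArg Subtype.val h), h2⟩
  · rintro ⟨h1, h2⟩
    exact ⟨fun h => h1 (Subtype.ext h), h2⟩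

theorem comparability_graph_perfect (P : Type*) [Preorder P] (m : ℕ)
    (hbound : ∀ s : Finset P, IsChain (· ≤ ·) (↑s : Set P) → s.card ≤ m)
    (hmax : ∃ s : Finset P, IsChain (· ≤ ·) (↑s : Set P) ∧ s.card = m) :
    (compGraph P).IsPerfect ∧
      (⨆ s : {s : Finset P // (compGraph P).IsClique ↑s}, (s.1.card : ℕ∞)) = m ∧
      (compGraph P).chromaticNumber = m := by
  obtain ⟨t, htc, htcard⟩ := hmax
  refine ⟨?_, ?_, ?_⟩
  · -- perfection
    intro s
    set T : Set P := (↑s : Set P)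
    set A : Set ℕ := {n | ∃ u : Finset T, IsChain (· ≤ ·) (↑u : Set T) ∧ u.card = n}
      with hA
    have hA0 : 0 ∈ A := ⟨∅, by simp [IsChain, Set.Pairwise], by simp⟩
    have hAbdd : BddAbove A := by
      refine ⟨s.card, ?_⟩
      rintro n ⟨u, -, rfl⟩
      calc u.card ≤ Fintype.card T := Finset.card_le_univ u
        _ = s.card := Fintype.card_coe s
    set m' : ℕ := sSup A with hm'
    have hmem : m' ∈ A := Nat.sSup_mem ⟨0, hA0⟩ hAbdd
    obtain ⟨u, huc, hucard⟩ := hmem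
    have hbound' : ∀ v : Finset T, IsChain (· ≤ ·) (↑v : Set T) → v.card ≤ m' :=
      fun v hv => le_csSup hAbdd ⟨v, hv, rfl⟩
    have hkey := compGraph_key hbound' ⟨u, huc, hucard⟩
    rw [induce_compGraph_eq P T, hkey.1, hkey.2]
  · -- sup of clique sizes
    refine le_antisymm (iSup_le ?_) ?_
    · rintro ⟨u, hu⟩
      exact_mod_cast Nat.cast_le.2
        (hbound u ((compGraph_clique_iff_chain (↑u : Set P)).1 hu))
    · have := le_iSup (fun s : {s : Finset P // (compGraph P).IsClique ↑s} =>
        (s.1.card : ℕ∞)) ⟨t, (compGraph_clique_iff_chain (↑t : Set P)).2 htc⟩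
      simpa [htcard] using this
  · exact (compGraph_key hbound ⟨t, htc, htcard⟩).1
end

section
/- If G is a group of finite exponent n, then the chromatic number of the power graph of G equals its clique number, and both are at most n. -/
open Subgroup

namespace PGAux

variable {G : Type*} [Group G]

/-- the set of generators of `⟨x⟩` -/
def cls (x : G) : Set G := {y : G | zpowers y = zpowers x}

open scoped Classical in
/-- `⟨x⟩` as a finset (junk if infinite) -/
noncomputable def D (x : G) : Finset G :=
  if h : (zpowers x : Set G).Finite then h.toFinset else ∅

open scoped Classical in
/-- the generators of `⟨x⟩` as a finset (junk if infinite) -/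
noncomputable def F (x : G) : Finset G :=
  if h : (cls x).Finite then h.toFinset else ∅

open scoped Classical in
noncomputable def heightAux : ℕ → G → ℕ
  | 0, _ => 0
  | m+1, x => (cls x).ncard +
      ((D x).filter (fun y => zpowers y < zpowers x)).sup (heightAux m)

variable (hfin : ∀ g : G, IsOfFinOrder g)

include hfin in
lemma zfin (x : G) : (zpowers x : Set G).Finite := (hfin x).finite_zpowers

include hfin in
lemma mem_D {x y : G} : y ∈ D x ↔ y ∈ zpowers x := by
  rw [D, dif_pos (zfin hfin x)]
  simp [Set.Finite.mem_toFinset]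

lemma cls_subset (x : G) : cls x ⊆ (zpowers x : Set G) := by
  intro y hy
  exact hy ▸ mem_zpowers y

include hfin in
lemma cls_finite (x : G) : (cls x).Finite := (zfin hfin x).subset (cls_subset x)

lemma mem_cls_self (x : G) : x ∈ cls x := rfl

include hfin in
lemma mem_F {x y : G} : y ∈ F x ↔ y ∈ cls x := by
  rw [F, dif_pos (cls_finite hfin x)]
  simp [Set.Finite.mem_toFinset]

include hfin in
lemma card_F (x : G) : (F x).card = (cls x).ncard := by
  rw [F, dif_pos (cls_finite hfin x), Set.ncard_eq_toFinset_card _ (cls_finite hfin x)]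

include hfin in
lemma cls_ncard_pos (x : G) : 0 < (cls x).ncard :=
  Set.ncard_pos (cls_finite hfin x) |>.mpr ⟨x, mem_cls_self x⟩

include hfin in
lemma adj_of_mem {z w : G} (hz : z ∈ zpowers w) (hne : w ≠ z) :
    (powerGraph G).Adj w z := by
  obtain ⟨k, hk⟩ := (hfin w).mem_powers_iff_mem_zpowers.mpr hz
  exact ⟨hne, k, Or.inl hk.symm⟩

lemma heightAux_congr {x y : G} (h : zpowers x = zpowers y) :
    ∀ m, heightAux m x = heightAux m y := by
  intro m
  cases m with
  | zero => rfl
  | succ m =>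
    have hc : cls x = cls y := by unfold cls; rw [h]
    have hD : D x = D y := by unfold D; rw [show (zpowers x : Set G) = zpowers y by rw [h]]
    classical
    have hf : (D y).filter (fun z => zpowers z < zpowers x)
        = (D y).filter (fun z => zpowers z < zpowers y) := by
      exact Finset.filter_congr fun z _ => by rw [h]
    simp only [heightAux, hc, hD, hf]

include hfin in
lemma order_lt_of_lt {x y : G} (h : zpowers y < zpowers x) : orderOf y < orderOf x := by
  have e : ∀ g : G, orderOf g = ((zpowers g : Set G)).ncard := by
    intro g
    rw [← Nat.card_zpowers, ← Nat.card_coe_set_eq]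
    rfl
  rw [e, e]
  exact Set.ncard_lt_ncard (SetLike.coe_ssubset_coe.mpr h) (zfin hfin x)

include hfin in
lemma heightAux_stable : ∀ N (x : G) m, orderOf x ≤ N → orderOf x ≤ m →
    heightAux (m+1) x = heightAux m x := by
  intro N
  induction N with
  | zero => intro x m hN _; exact absurd hN (by simpa using (hfin x).orderOf_pos.ne')
  | succ N ih =>
    intro x m hN hm
    have hx1 : 1 ≤ m := le_trans (hfin x).orderOf_pos hm
    obtain ⟨m', rfl⟩ := Nat.exists_eq_add_of_le' hx1
    simp only [heightAux]
    congr 1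
    apply Finset.sup_congr rfl
    intro y hy
    classical
    rw [Finset.mem_filter] at hy
    have hlt := order_lt_of_lt hfin hy.2
    exact ih y m' (by omega) (by omega)

include hfin in
lemma heightAux_le_of_lt {x y : G} {m : ℕ} (hm : orderOf x ≤ m) (h : zpowers y < zpowers x) :
    heightAux m y + (cls x).ncard ≤ heightAux m x := by
  classical
  obtain ⟨m', rfl⟩ := Nat.exists_eq_add_of_le' (le_trans (hfin x).orderOf_pos hm)
  have hy : y ∈ (D x).filter (fun z => zpowers z < zpowers x) := by
    rw [Finset.mem_filter, mem_D hfin]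
    exact ⟨zpowers_le.mp h.le, h⟩
  have hsup : heightAux m' y ≤
      ((D x).filter (fun z => zpowers z < zpowers x)).sup (heightAux m') :=
    Finset.le_sup hy
  have hst : heightAux (m' + 1) y = heightAux m' y :=
    heightAux_stable hfin (orderOf y) y m' le_rfl
      (by have := order_lt_of_lt hfin h; omega)
  have hux : heightAux (m' + 1) x =
      (cls x).ncard + ((D x).filter (fun z => zpowers z < zpowers x)).sup (heightAux m') := rfl
  show heightAux (m' + 1) y + (cls x).ncard ≤ heightAux (m' + 1) x
  omega

omit hfin in
lemma cls_ncard_le_heightAux (x : G) {m : ℕ} (hm : 1 ≤ m) :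
    (cls x).ncard ≤ heightAux m x := by
  obtain ⟨m', rfl⟩ := Nat.exists_eq_add_of_le' hm
  exact Nat.le_add_right _ _

include hfin in
lemma isClique_F (x : G) : (powerGraph G).IsClique ↑(F x) := by
  intro a ha b hb hne
  rw [Finset.mem_coe, mem_F hfin] at ha hb
  exact adj_of_mem hfin (show b ∈ zpowers a by rw [ha, ← hb]; exact mem_zpowers b) hne

include hfin in
lemma exists_clique : ∀ (m : ℕ) (x : G), ∃ s : Finset G, (powerGraph G).IsClique ↑s ∧
    (↑s : Set G) ⊆ (zpowers x : Set G) ∧ heightAux m x ≤ s.card := by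
  intro m
  induction m with
  | zero =>
    intro x
    exact ⟨∅, by simp [SimpleGraph.IsClique], by simp, by simp [heightAux]⟩
  | succ m ih =>
    intro x
    classical
    have hunfold : heightAux (m + 1) x =
        (cls x).ncard + ((D x).filter (fun z => zpowers z < zpowers x)).sup (heightAux m) := rfl
    have hFsub : (↑(F x) : Set G) ⊆ (zpowers x : Set G) := by
      intro a ha; rw [Finset.mem_coe, mem_F hfin] at ha; exact cls_subset x ha
    rcases ((D x).filter (fun z => zpowers z < zpowers x)).eq_empty_or_nonempty with he | hne
    · refine ⟨F x, isClique_F hfin x, hFsub, ?_⟩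
      rw [hunfold, he]
      simp [card_F hfin x]
    · obtain ⟨y, hy, hsup⟩ := Finset.exists_mem_eq_sup _ hne (heightAux m)
      rw [Finset.mem_filter] at hy
      obtain ⟨t, htc, hts, htcard⟩ := ih y
      have htsub : (↑t : Set G) ⊆ (zpowers x : Set G) :=
        fun b hb => hy.2.le (hts hb)
      have hdisj : Disjoint (F x) t := by
        rw [Finset.disjoint_left]
        intro a haF hat
        rw [mem_F hfin] at haF
        have h1 : zpowers a ≤ zpowers y := zpowers_le.mpr (hts hat)
        rw [haF] at h1
        exact absurd h1 (not_le_of_gt hy.2)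
      have cross : ∀ a ∈ F x, ∀ b ∈ t, a ≠ b → (powerGraph G).Adj a b := by
        intro a haF b hbt hne'
        rw [mem_F hfin] at haF
        exact adj_of_mem hfin (show b ∈ zpowers a by rw [haF]; exact htsub hbt) hne'
      refine ⟨F x ∪ t, ?_, ?_, ?_⟩
      · intro a ha b hb hne'
        simp only [Finset.coe_union, Set.mem_union, Finset.mem_coe] at ha hb
        rcases ha with ha | ha <;> rcases hb with hb | hb
        · exact isClique_F hfin x (by simpa using ha) (by simpa using hb) hne'
        · exact cross a ha b hb hne'
        · exact (cross b hb a ha hne'.symm).symm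
        · exact htc (Finset.mem_coe.mpr ha) (Finset.mem_coe.mpr hb) hne'
      · rw [Finset.coe_union]
        exact Set.union_subset hFsub htsub
      · rw [Finset.card_union_of_disjoint hdisj, hunfold, hsup, card_F hfin x]
        omega

omit hfin in
lemma clique_top : ∀ s : Finset G, (powerGraph G).IsClique ↑s → s.Nonempty →
    ∃ g ∈ s, ∀ a ∈ s, a ∈ zpowers g := by
  classical
  intro s
  induction s using Finset.induction_on with
  | empty => intro _ h; simp at h
  | @insert a t hat ih =>
    intro hc _
    rcases t.eq_empty_or_nonempty with rfl | hne
    · exact ⟨a, by simp, by simp [mem_zpowers]⟩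
    · have htc : (powerGraph G).IsClique ↑t := hc.subset (by simp [Finset.coe_insert, Set.subset_insert])
      obtain ⟨g, hg, hgtop⟩ := ih htc hne
      have hag : a ≠ g := fun h => hat (h ▸ hg)
      have hadj : (powerGraph G).Adj a g := hc (by simp) (by simp [hg]) hag
      obtain ⟨-, k, hk | hk⟩ := hadj
      · refine ⟨a, by simp, ?_⟩
        intro b hb
        rw [Finset.mem_insert] at hb
        rcases hb with rfl | hb
        · exact mem_zpowers b
        · have hga : g ∈ zpowers a := hk ▸ (zpowers a).pow_mem (mem_zpowers a) k
          exact zpowers_le.mpr hga (hgtop b hb)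
      · refine ⟨g, by simp [hg], ?_⟩
        intro b hb
        rw [Finset.mem_insert] at hb
        rcases hb with rfl | hb
        · exact hk ▸ (zpowers g).pow_mem (mem_zpowers g) k
        · exact hgtop b hb

end PGAux


open Subgroup in
theorem powerGraph_chromatic_eq_clique_of_bounded_exponent (G : Type*) [Group G] (n : ℕ)
    (hn : 0 < n) (hexp : Monoid.exponent G = n) :
    (powerGraph G).chromaticNumber =
        (⨆ s : {s : Finset G // (powerGraph G).IsClique ↑s}, (s.1.card : ℕ∞)) ∧
      (powerGraph G).chromaticNumber ≤ n ∧
      (⨆ s : {s : Finset G // (powerGraph G).IsClique ↑s}, (s.1.card : ℕ∞)) ≤ n := by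
  classical
  have hfin : ∀ g : G, IsOfFinOrder g := by
    intro g
    have hd : orderOf g ∣ n := hexp ▸ Monoid.order_dvd_exponent g
    rw [← orderOf_pos_iff]
    refine Nat.pos_of_ne_zero fun h0 => ?_
    rw [h0, zero_dvd_iff] at hd
    omega
  have hord : ∀ g : G, orderOf g ≤ n := fun g =>
    Nat.le_of_dvd hn (hexp ▸ Monoid.order_dvd_exponent g)
  set ω := ⨆ s : {s : Finset G // (powerGraph G).IsClique ↑s}, (s.1.card : ℕ∞) with hω
  -- every clique has at most n elements
  have hcard : ∀ s : Finset G, (powerGraph G).IsClique ↑s → s.card ≤ n := by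
    intro s hs
    rcases s.eq_empty_or_nonempty with rfl | hne
    · simp
    · obtain ⟨g, hg, htop⟩ := PGAux.clique_top s hs hne
      have hsub : (↑s : Set G) ⊆ (zpowers g : Set G) := fun a ha => htop a ha
      have h1 : s.card = (↑s : Set G).ncard := (Set.ncard_coe_finset s).symm
      have h2 : (↑s : Set G).ncard ≤ ((zpowers g : Set G)).ncard :=
        Set.ncard_le_ncard hsub (PGAux.zfin hfin g)
      have h3 : ((zpowers g : Set G)).ncard = orderOf g := by
        rw [← Nat.card_coe_set_eq]
        exact Nat.card_zpowers g
      have := hord g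
      omega
  have hωn : ω ≤ (n : ℕ∞) := by
    rw [hω]
    exact iSup_le fun s => Nat.cast_le.mpr (hcard s.1 s.2)
  have hωtop : ω ≠ ⊤ := (hωn.trans_lt (ENat.coe_lt_top n)).ne
  set M := ω.toNat with hM
  have hMω : (M : ℕ∞) = ω := ENat.coe_toNat hωtop
  have hht : ∀ x : G, PGAux.heightAux n x ≤ M := by
    intro x
    obtain ⟨s, hs, -, hcard'⟩ := PGAux.exists_clique hfin n x
    have h1 : (s.card : ℕ∞) ≤ ω := hω ▸ le_iSup
      (fun s : {s : Finset G // (powerGraph G).IsClique ↑s} => (s.1.card : ℕ∞)) ⟨s, hs⟩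
    rw [← hMω, Nat.cast_le] at h1
    omega
  have hωχ : ω ≤ (powerGraph G).chromaticNumber := by
    rw [hω]
    exact iSup_le fun s => s.2.card_le_chromaticNumber
  -- the coloring
  let idx : G → ℕ := fun x => (PGAux.F x).toList.idxOf x
  have hmemF : ∀ x : G, x ∈ (PGAux.F x).toList := by
    intro x
    rw [Finset.mem_toList, PGAux.mem_F hfin]
    exact PGAux.mem_cls_self x
  have hidx_lt : ∀ x : G, idx x < (PGAux.cls x).ncard := by
    intro x
    have h := List.idxOf_lt_length_iff.mpr (hmemF x)
    rwa [Finset.length_toList, PGAux.card_F hfin x] at h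
  let c : G → ℕ := fun x => PGAux.heightAux n x - idx x
  have hc_def : ∀ x, c x = PGAux.heightAux n x - idx x := fun _ => rfl
  have hc_le : ∀ x, c x ≤ PGAux.heightAux n x := fun x => Nat.sub_le _ _
  have hcls_le : ∀ x : G, (PGAux.cls x).ncard ≤ PGAux.heightAux n x := fun x =>
    PGAux.cls_ncard_le_heightAux x hn
  have hc_pos : ∀ x, 1 ≤ c x := by
    intro x
    have h1 := hcls_le x
    have h2 := hidx_lt x
    have h3 := hc_def x
    omega
  have hlt_case : ∀ x y : G, zpowers y < zpowers x → c y < c x := by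
    intro x y h
    have h1 : PGAux.heightAux n y + (PGAux.cls x).ncard ≤ PGAux.heightAux n x :=
      PGAux.heightAux_le_of_lt hfin (hord x) h
    have h2 := hidx_lt x
    have h3 := hc_le y
    have h4 := hc_def x
    omega
  have heq_case : ∀ x y : G, x ≠ y → zpowers x = zpowers y → c x ≠ c y := by
    intro x y hne h
    have hH : PGAux.heightAux n x = PGAux.heightAux n y := PGAux.heightAux_congr h n
    have hclseq : PGAux.cls x = PGAux.cls y := by
      unfold PGAux.cls
      rw [h]
    have hF : PGAux.F x = PGAux.F y := by
      unfold PGAux.F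
      rw [hclseq]
    have hyl : y ∈ (PGAux.F x).toList := by rw [hF]; exact hmemF y
    have hidx_ne : idx x ≠ idx y := by
      intro hxy
      apply hne
      have : idx y = (PGAux.F x).toList.idxOf y := by simp only [idx, hF]
      rw [this] at hxy
      exact (List.idxOf_inj (hmemF x)).mp hxy
    have h1 := hidx_lt x
    have h2 := hidx_lt y
    have h3 := hcls_le x
    have h4 := hc_def x
    have h5 := hc_def y
    rw [hclseq] at h1 h3
    rw [← hH] at h5
    omega
  have hc_ne : ∀ {x y : G}, (powerGraph G).Adj x y → c x ≠ c y := by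
    intro x y hadj
    obtain ⟨hne, k, hk | hk⟩ := hadj
    · have hyx : zpowers y ≤ zpowers x :=
        zpowers_le.mpr (hk ▸ (zpowers x).pow_mem (mem_zpowers x) k)
      rcases hyx.lt_or_eq with hlt | heq
      · exact (hlt_case x y hlt).ne'
      · exact heq_case x y hne heq.symm
    · have hxy : zpowers x ≤ zpowers y :=
        zpowers_le.mpr (hk ▸ (zpowers y).pow_mem (mem_zpowers y) k)
      rcases hxy.lt_or_eq with hlt | heq
      · exact (hlt_case y x hlt).ne
      · exact heq_case x y hne heq
  have hcol : (powerGraph G).Colorable M := by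
    refine ⟨SimpleGraph.Coloring.mk (fun x => ⟨c x - 1, ?_⟩) ?_⟩
    · have h1 := hc_pos x
      have h2 := hc_le x
      have h3 := hht x
      omega
    · intro x y hadj hfeq
      have h1 := hc_pos x
      have h2 := hc_pos y
      have h3 : c x - 1 = c y - 1 := by simpa using hfeq
      exact hc_ne hadj (by omega)
  have hχω : (powerGraph G).chromaticNumber ≤ ω := by
    rw [← hMω]
    exact hcol.chromaticNumber_le
  have hmain : (powerGraph G).chromaticNumber = ω := le_antisymm hχω hωχ
  exact ⟨hmain, hmain ▸ hωn, hωn⟩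
end

section
/- Let H be a subgroup of finite index in a group G. Then the power graph of H has finite clique number if and only if the power graph of G has finite clique number. -/
lemma zpowers_isCyclic {G : Type*} [Group G] (z : G) :
    IsCyclic (Subgroup.zpowers z) := by
  refine ⟨⟨⟨z, Subgroup.mem_zpowers z⟩, fun x => ?_⟩⟩
  obtain ⟨k, hk⟩ := Subgroup.mem_zpowers_iff.mp x.2
  exact Subgroup.mem_zpowers_iff.mpr ⟨k, Subtype.ext (by simpa using hk)⟩

lemma fiber_bound {G : Type*} [Group G] {m : ℕ} (hm : 0 < m) (F : Finset G)
    (hF : (powerGraph G).IsClique ↑F) {c : G} (hc : ∀ w ∈ F, w ^ m = c) :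
    F.card ≤ m := by
  classical
  by_cases h1 : F.card ≤ 1
  · exact h1.trans hm
  push_neg at h1
  have key : ∀ u : G, ∀ n : ℕ, n ≠ 1 → u ^ (n * m) = u ^ m → IsOfFinOrder u := by
    intro u n hn h
    rcases Nat.lt_or_ge n 1 with h0 | h2
    · interval_cases n
      exact isOfFinOrder_iff_pow_eq_one.mpr ⟨m, hm, by simpa using h.symm⟩
    · have h2 : 2 ≤ n := by omega
      have hnm : 2 * m ≤ n * m := Nat.mul_le_mul_right m h2
      refine isOfFinOrder_iff_pow_eq_one.mpr ⟨n * m - m, by omega, ?_⟩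
      have : u ^ (n * m - m) * u ^ m = u ^ m := by
        rw [← pow_add, Nat.sub_add_cancel (by omega : m ≤ n * m)]; exact h
      exact mul_right_cancel (this.trans (one_mul _).symm)
  have hfin : ∀ z ∈ F, IsOfFinOrder z := by
    intro z hz
    obtain ⟨w, hw, hne⟩ := F.exists_mem_ne h1 z
    obtain ⟨-, n, hn | hn⟩ := hF hw hz hne
    · -- z = w ^ n
      rcases eq_or_ne n 1 with rfl | hn1
      · exact absurd (by simpa using hn.symm) hne
      · have hwfin : IsOfFinOrder w := key w n hn1
          (by rw [pow_mul, ← hn, hc z hz, hc w hw])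
        exact hn ▸ hwfin.pow
    · -- w = z ^ n
      rcases eq_or_ne n 1 with rfl | hn1
      · exact absurd (by simpa using hn) hne
      · exact key z n hn1 (by rw [pow_mul, ← hn, hc w hw, hc z hz])
  obtain ⟨z, hzF, hzmax⟩ := F.exists_max_image orderOf (Finset.card_pos.mp (by omega))
  have hd : orderOf z ≠ 0 := (hfin z hzF).orderOf_pos.ne'
  have hmem : ∀ w ∈ F, w ∈ Subgroup.zpowers z := by
    intro w hwF
    by_cases hwz : w = z
    · rw [hwz]; exact Subgroup.mem_zpowers z
    obtain ⟨-, n, hn | hn⟩ := hF hzF hwF (Ne.symm hwz)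
    · exact Subgroup.mem_zpowers_iff.mpr ⟨n, (zpow_natCast z n).trans hn.symm⟩
    · -- z = w ^ n
      have h1 : orderOf z ≤ orderOf w :=
        Nat.le_of_dvd (hfin w hwF).orderOf_pos (hn ▸ orderOf_pow_dvd n)
      have h2 : orderOf w ≤ orderOf z := hzmax w hwF
      have hsub : (Subgroup.zpowers z : Set G) ⊆ (Subgroup.zpowers w : Set G) := by
        have : Subgroup.zpowers z ≤ Subgroup.zpowers w :=
          Subgroup.zpowers_le.mpr (hn ▸ Subgroup.npow_mem_zpowers w n)
        exact this
      haveI : Finite (Subgroup.zpowers w) :=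
        Nat.finite_of_card_ne_zero (by rw [Nat.card_zpowers]; exact (hfin w hwF).orderOf_pos.ne')
      have hcard : (Subgroup.zpowers w : Set G).ncard ≤ (Subgroup.zpowers z : Set G).ncard := by
        rw [← Nat.card_coe_set_eq, ← Nat.card_coe_set_eq,
          SetLike.coe_sort_coe, SetLike.coe_sort_coe, Nat.card_zpowers, Nat.card_zpowers]
        omega
      have heq := Set.eq_of_subset_of_ncard_le hsub hcard (Set.toFinite _)
      have : w ∈ (Subgroup.zpowers w : Set G) := Subgroup.mem_zpowers w
      rwa [← heq] at this
  haveI : Finite (Subgroup.zpowers z) :=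
    Nat.finite_of_card_ne_zero (by rw [Nat.card_zpowers]; exact hd)
  haveI : Fintype ↥(Subgroup.zpowers z) := Fintype.ofFinite _
  haveI : IsCyclic ↥(Subgroup.zpowers z) := zpowers_isCyclic z
  set T : Finset ↥(Subgroup.zpowers z) :=
    Finset.univ.filter (fun t => t ^ m = 1) with hT_def
  have hT : T.card ≤ m := IsCyclic.card_pow_eq_one_le hm
  have himg : F.image (· * z⁻¹) ⊆ T.image (fun t : ↥(Subgroup.zpowers z) => (t : G)) := by
    intro u hu
    obtain ⟨w, hwF, rfl⟩ := Finset.mem_image.mp hu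
    have hwz := hmem w hwF
    obtain ⟨k, hk⟩ := Subgroup.mem_zpowers_iff.mp hwz
    have humem : w * z⁻¹ ∈ Subgroup.zpowers z :=
      mul_mem hwz (inv_mem (Subgroup.mem_zpowers z))
    have hpow : (w * z⁻¹) ^ m = 1 := by
      have h3 : w * z⁻¹ = z ^ (k - 1) := by rw [zpow_sub, zpow_one, hk]
      rw [h3, ← zpow_natCast, ← zpow_mul, sub_mul, one_mul, zpow_sub, zpow_mul,
        zpow_natCast, zpow_natCast, hk, hc w hwF, hc z hzF, mul_inv_cancel]
    refine Finset.mem_image.mpr ⟨⟨w * z⁻¹, humem⟩, Finset.mem_filter.mpr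
      ⟨Finset.mem_univ _, Subtype.ext (by simpa using hpow)⟩, rfl⟩
  calc F.card = (F.image (· * z⁻¹)).card :=
        (Finset.card_image_of_injective F (mul_left_injective z⁻¹)).symm
    _ ≤ (T.image (fun t : ↥(Subgroup.zpowers z) => (t : G))).card := Finset.card_le_card himg
    _ ≤ T.card := Finset.card_image_le
    _ ≤ m := hT

theorem finite_clique_number_iff_of_finiteIndex (G : Type*) [Group G]
    (H : Subgroup G) (hH : H.FiniteIndex) :
    (∃ N : ℕ, ∀ s : Finset H, (powerGraph H).IsClique ↑s → s.card ≤ N) ↔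
      (∃ N : ℕ, ∀ s : Finset G, (powerGraph G).IsClique ↑s → s.card ≤ N) := by
  classical
  constructor
  · rintro ⟨N, hN⟩
    haveI : H.normalCore.FiniteIndex := Subgroup.finiteIndex_normalCore H
    set m := H.normalCore.index with hm_def
    have hm0 : 0 < m := Nat.pos_of_ne_zero Subgroup.FiniteIndex.index_ne_zero
    set f : G → H := fun x =>
      ⟨x ^ m, H.normalCore_le (Subgroup.pow_index_mem H.normalCore x)⟩ with hf_def
    refine ⟨m * N, fun s hs => ?_⟩
    have himage : (powerGraph H).IsClique ↑(s.image f) := by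
      intro a ha b hb hab
      simp only [Finset.coe_image, Set.mem_image, Finset.mem_coe] at ha hb
      obtain ⟨x, hx, rfl⟩ := ha
      obtain ⟨y, hy, rfl⟩ := hb
      have hxy : x ≠ y := fun h => hab (by rw [h])
      obtain ⟨-, n, hn | hn⟩ := hs hx hy hxy
      · refine ⟨hab, n, Or.inl (Subtype.ext ?_)⟩
        show y ^ m = ((f x) ^ n : H)
        push_cast [hf_def]
        rw [hn, ← pow_mul, ← pow_mul, Nat.mul_comm]
      · refine ⟨hab, n, Or.inr (Subtype.ext ?_)⟩
        show x ^ m = ((f y) ^ n : H)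
        push_cast [hf_def]
        rw [hn, ← pow_mul, ← pow_mul, Nat.mul_comm]
    refine (Finset.card_le_mul_card_image (f := f) s m fun b hb => ?_).trans
      (Nat.mul_le_mul_left m (hN _ himage))
    refine fiber_bound hm0 _ (hs.subset (Finset.coe_subset.mpr (Finset.filter_subset _ s)))
      (c := (b : G)) ?_
    intro w hw
    have h := (Finset.mem_filter.mp hw).2
    exact congrArg Subtype.val h
  · rintro ⟨N, hN⟩
    refine ⟨N, fun s hs => ?_⟩
    have himage : (powerGraph G).IsClique ↑(s.image (fun x : H => (x : G))) := by
      intro a ha b hb hab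
      simp only [Finset.coe_image, Set.mem_image, Finset.mem_coe] at ha hb
      obtain ⟨x, hx, rfl⟩ := ha
      obtain ⟨y, hy, rfl⟩ := hb
      have hxy : x ≠ y := fun h => hab (by rw [h])
      obtain ⟨-, n, hn | hn⟩ := hs hx hy hxy
      · exact ⟨hab, n, Or.inl (by rw [hn]; push_cast; rfl)⟩
      · exact ⟨hab, n, Or.inr (by rw [hn]; push_cast; rfl)⟩
    have h := hN _ himage
    rwa [Finset.card_image_of_injective _ Subtype.val_injective] at h
end

section
/- If every vertex of the power graph of a group G has finite degree, then G is a finite group. -/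
theorem finite_of_all_degrees_finite (G : Type*) [Group G]
    (h : ∀ g : G, ((powerGraph G).neighborSet g).Finite) : Finite G := by
  have tor : ∀ g : G, IsOfFinOrder g := by
    intro g
    by_contra hg
    have hinj : Function.Injective (fun n : ℕ => g ^ n) :=
      injective_pow_iff_not_isOfFinOrder.mpr hg
    apply (h g).not_infinite
    refine Set.infinite_of_injective_forall_mem (f := fun n : ℕ => g ^ (n + 2)) ?_ ?_
    · intro a b hab
      have := hinj hab
      omega
    · intro n
      refine ⟨fun he => ?_, n + 2, Or.inl rfl⟩
      have : g ^ 1 = g ^ (n + 2) := by simpa using he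
      have := hinj this
      omega
  have hsub : (Set.univ : Set G) ⊆ insert 1 ((powerGraph G).neighborSet 1) := by
    intro g _
    rcases eq_or_ne g 1 with rfl | hg1
    · exact Set.mem_insert _ _
    · right
      obtain ⟨n, hn, hgn⟩ := (tor g).exists_pow_eq_one
      exact ⟨fun he => hg1 he.symm, n, Or.inr hgn.symm⟩
  have : (Set.univ : Set G).Finite := Set.Finite.subset ((h 1).insert 1) hsub
  exact Set.finite_univ_iff.mp this
end

section
/- Let x, y, z be elements of a group G such that the subgroups ⟨x,y⟩, ⟨x,z⟩ and ⟨y,z⟩ are all cyclic. Then ⟨x,y,z⟩ is cyclic. -/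
open Subgroup

section NotCyclic

lemma pow_p_eq_one (p : ℕ) [NeZero p] (t : Multiplicative (ZMod p × ZMod p)) :
    t ^ p = 1 := by
  have h0 : (p : ZMod p × ZMod p) = 0 := by
    simp [Prod.ext_iff]
  apply Multiplicative.toAdd.injective
  rw [toAdd_pow]
  show p • t.toAdd = Multiplicative.toAdd 1
  rw [nsmul_eq_mul, h0, zero_mul]
  rfl

/-- `Multiplicative (ZMod p × ZMod p)` is not cyclic for `p` prime. -/
lemma not_isCyclic_mult (p : ℕ) (hp : p.Prime) :
    ¬ IsCyclic (Multiplicative (ZMod p × ZMod p)) := by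
  haveI : Fact p.Prime := ⟨hp⟩
  intro h
  obtain ⟨g, hg⟩ := h
  have hcard : Nat.card (Multiplicative (ZMod p × ZMod p)) = p * p := by
    rw [Nat.card_congr (Multiplicative.toAdd (α := ZMod p × ZMod p))]
    simp [Nat.card_prod]
  have hpow : g ^ p = 1 := pow_p_eq_one p g
  have h1 : orderOf g = p * p := by
    rw [orderOf_eq_card_of_forall_mem_zpowers hg, hcard]
  have h2 : orderOf g ∣ p := orderOf_dvd_of_pow_eq_one hpow
  rw [h1] at h2
  have hle : p * p ≤ p := Nat.le_of_dvd hp.pos h2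
  nlinarith [hp.one_lt]

end NotCyclic

section PairStep

/-- In a group of exponent dividing a prime `p`, if `⟨u,v⟩` is cyclic and `u ≠ 1`
then `v` is a power of `u`. -/
lemma pair_zpow {T : Type*} [Group T] (p : ℕ) (hp : p.Prime)
    (hT : ∀ t : T, t ^ p = 1) {u v : T} (hu : u ≠ 1)
    (h : IsCyclic ↥(Subgroup.closure ({u, v} : Set T))) : v ∈ Subgroup.zpowers u := by
  obtain ⟨g, hg⟩ := h
  have hum : u ∈ closure ({u, v} : Set T) := subset_closure (by simp)
  have hvm : v ∈ closure ({u, v} : Set T) := subset_closure (by simp)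
  obtain ⟨m, hm⟩ := hg ⟨u, hum⟩
  obtain ⟨n, hn⟩ := hg ⟨v, hvm⟩
  have hm' : (g : T) ^ m = u := by
    have := congrArg (Subtype.val) hm
    simpa using this
  have hn' : (g : T) ^ n = v := by
    have := congrArg (Subtype.val) hn
    simpa using this
  have hgp : (g : T) ^ (p : ℤ) = 1 := by
    rw [zpow_natCast]; exact hT g
  have hpm : ¬ (p : ℤ) ∣ m := by
    rintro ⟨t, rfl⟩
    apply hu
    rw [← hm', zpow_mul, hgp, one_zpow]
  have hprime : Prime (p : ℤ) := Nat.prime_iff_prime_int.mp hp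
  have hco : IsCoprime ((p : ℤ)) m := (hprime.coprime_iff_not_dvd).mpr hpm
  obtain ⟨a, b, hab⟩ := hco
  have hgu : (g : T) = u ^ b := by
    calc (g : T) = (g : T) ^ (a * (p : ℤ) + b * m) := by rw [hab, zpow_one]
    _ = ((g : T) ^ (p : ℤ)) ^ a * ((g : T) ^ m) ^ b := by
        rw [zpow_add, mul_comm a ((p : ℤ)), mul_comm b m, zpow_mul, zpow_mul]
    _ = u ^ b := by rw [hgp, hm', one_zpow, one_mul]
  refine ⟨b * n, ?_⟩
  show u ^ (b * n) = v
  rw [← hn', hgu, ← zpow_mul]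

end PairStep

section Structure

/-- A finitely generated abelian group with no surjection onto `ZMod p × ZMod p`
for any prime `p` is cyclic. -/
lemma aux_cyclic (M : Type*) [AddCommGroup M] [AddGroup.FG M]
    (h : ∀ p : ℕ, p.Prime → ∀ f : M →+ ZMod p × ZMod p, ¬ Function.Surjective f) :
    IsAddCyclic M := by
  classical
  obtain ⟨n, ι, fι, p, hp, e, ⟨F⟩⟩ := AddCommGroup.equiv_free_prod_directSum_zmod M
  let F2 : M ≃+ (Fin n → ℤ) × ∀ i, ZMod (p i ^ e i) :=
    F.trans ((Finsupp.addEquivFunOnFinite).prodCongr (DirectSum.addEquivProd _))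
  have key : ∀ (q : ℕ), q.Prime →
      ∀ g : ((Fin n → ℤ) × ∀ i, ZMod (p i ^ e i)) →+ ZMod q × ZMod q,
      Function.Surjective g → False := fun q hq g hg =>
    h q hq (g.comp F2.toAddMonoidHom) (hg.comp F2.surjective)
  haveI : ∀ i, NeZero (p i) := fun i => ⟨(hp i).pos.ne'⟩
  haveI : ∀ i, NeZero (p i ^ e i) := fun i => ⟨(pow_pos (hp i).pos _).ne'⟩
  -- n ≤ 1
  have hn1 : n ≤ 1 := by
    by_contra hn
    push_neg at hn
    obtain ⟨n', rfl⟩ : ∃ m, n = m + 2 := ⟨n - 2, by omega⟩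
    have h01 : (0 : Fin (n' + 2)) ≠ (1 : Fin (n' + 2)) := by
      simp [Fin.ext_iff]
    refine key 2 Nat.prime_two
      ((((Int.castAddHom (ZMod 2)).comp (Pi.evalAddMonoidHom _ (0 : Fin (n' + 2)))).prod
        ((Int.castAddHom (ZMod 2)).comp (Pi.evalAddMonoidHom _ (1 : Fin (n' + 2))))).comp
        (AddMonoidHom.fst _ _)) ?_
    rintro ⟨s, t⟩
    obtain ⟨A, hA⟩ := ZMod.intCast_surjective (n := 2) s
    obtain ⟨B, hB⟩ := ZMod.intCast_surjective (n := 2) t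
    refine ⟨⟨fun j => if j = (0 : Fin (n' + 2)) then A else B, 0⟩, ?_⟩
    simp only [AddMonoidHom.coe_comp, Function.comp_apply, AddMonoidHom.coe_fst,
      AddMonoidHom.prod_apply, Pi.evalAddMonoidHom_apply, Int.coe_castAddHom]
    simp [hA, hB]
  -- if some torsion exists then n = 0
  have htors : ∀ i, e i ≠ 0 → n = 0 := by
    intro i hi
    by_contra hn0
    have hn : n = 1 := by omega
    subst hn
    refine key (p i) (hp i)
      (AddMonoidHom.prodMap
        ((Int.castAddHom (ZMod (p i))).comp (Pi.evalAddMonoidHom _ (0 : Fin 1)))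
        (((ZMod.castHom (dvd_pow_self (p i) hi) (ZMod (p i))).toAddMonoidHom).comp
          (Pi.evalAddMonoidHom _ i))) ?_
    have h1 : Function.Surjective
        ((Int.castAddHom (ZMod (p i))).comp (Pi.evalAddMonoidHom (fun _ : Fin 1 => ℤ) 0)) := by
      intro s
      obtain ⟨A, hA⟩ := ZMod.intCast_surjective (n := p i) s
      exact ⟨fun _ => A, hA⟩
    have h2 : Function.Surjective
        ((((ZMod.castHom (dvd_pow_self (p i) hi) (ZMod (p i))).toAddMonoidHom)).comp
          (Pi.evalAddMonoidHom (fun j => ZMod (p j ^ e j)) i)) := by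
      intro t
      obtain ⟨k, rfl⟩ := ZMod.natCast_zmod_surjective (n := p i) t
      refine ⟨Function.update 0 i ((k : ZMod (p i ^ e i))), ?_⟩
      simp [Pi.evalAddMonoidHom_apply, Function.update_self, map_natCast]
    have := Function.Surjective.prodMap h1 h2
    simpa using this
  -- distinct primes in the torsion part
  have hdisj : ∀ i j, i ≠ j → e i ≠ 0 → e j ≠ 0 → p i ≠ p j := by
    intro i j hij hi hj hpp
    refine key (p i) (hp i)
      (((((ZMod.castHom (dvd_pow_self (p i) hi) (ZMod (p i))).toAddMonoidHom).comp
          (Pi.evalAddMonoidHom _ i)).prod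
        (((ZMod.castHom (show p i ∣ p j ^ e j by rw [hpp]; exact dvd_pow_self _ hj) (ZMod (p i))).toAddMonoidHom).comp
          (Pi.evalAddMonoidHom _ j))).comp (AddMonoidHom.snd _ _)) ?_
    rintro ⟨s, t⟩
    obtain ⟨ks, hks⟩ := ZMod.natCast_zmod_surjective (n := p i) s
    obtain ⟨kt, hkt⟩ := ZMod.natCast_zmod_surjective (n := p i) t
    refine ⟨⟨0, Function.update (Function.update 0 i ((ks : ZMod (p i ^ e i)))) j
      ((kt : ZMod (p j ^ e j)))⟩, ?_⟩
    simp only [AddMonoidHom.coe_comp, Function.comp_apply, AddMonoidHom.coe_snd,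
      AddMonoidHom.prod_apply, Pi.evalAddMonoidHom_apply, RingHom.toAddMonoidHom_eq_coe,
      AddMonoidHom.coe_coe]
    rw [Function.update_of_ne hij, Function.update_self, Function.update_self,
      map_natCast, map_natCast, hks, hkt]
  -- pairwise coprime moduli
  have hcop : (Set.univ : Set ι).Pairwise (Function.onFun Nat.Coprime fun i => p i ^ e i) := by
    intro i _ j _ hij
    by_cases hi : e i = 0
    · simp [Function.onFun, hi]
    by_cases hj : e j = 0
    · simp [Function.onFun, hj]
    show Nat.Coprime (p i ^ e i) (p j ^ e j)
    exact Nat.Coprime.pow _ _ ((Nat.coprime_primes (hp i) (hp j)).mpr (hdisj i j hij hi hj))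
  have crtSurj : Function.Surjective
      (fun k : ℤ => fun i => ((k : ZMod (p i ^ e i)))) := by
    intro v
    have hs : ∀ i ∈ Finset.univ, (fun i => p i ^ e i) i ≠ 0 :=
      fun i _ => (pow_pos (hp i).pos _).ne'
    obtain ⟨K, hK⟩ := Nat.chineseRemainderOfFinset (fun i => (v i).val)
      (fun i => p i ^ e i) Finset.univ hs (by simpa using hcop)
    refine ⟨(K : ℤ), funext fun i => ?_⟩
    have h1 : ((K : ℕ) : ZMod (p i ^ e i)) = (((v i).val : ℕ) : ZMod (p i ^ e i)) :=
      (ZMod.natCast_eq_natCast_iff _ _ _).mpr (hK i (Finset.mem_univ i))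
    have h2 : (((v i).val : ℕ) : ZMod (p i ^ e i)) = v i := ZMod.natCast_rightInverse (v i)
    push_cast
    rw [h1, h2]
  let crtHom : ℤ →+ ∀ i, ZMod (p i ^ e i) :=
    AddMonoidHom.mk' (fun k => fun i => ((k : ZMod (p i ^ e i))))
      (by intro a b; funext i; simp [Int.cast_add])
  by_cases hn0 : n = 0
  · subst hn0
    refine isAddCyclic_of_surjective
      (F2.symm.toAddMonoidHom.comp ((0 : ℤ →+ (Fin 0 → ℤ)).prod crtHom)) ?_
    refine F2.symm.surjective.comp ?_
    rintro ⟨v, d⟩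
    obtain ⟨k, hk⟩ := crtSurj d
    exact ⟨k, Prod.ext (Subsingleton.elim _ _) hk⟩
  · have hn : n = 1 := by omega
    subst hn
    have he : ∀ i, e i = 0 := by
      intro i
      by_contra hi
      exact absurd (htors i hi) one_ne_zero
    haveI hsub : Subsingleton (∀ i, ZMod (p i ^ e i)) := by
      constructor
      intro a b
      funext i
      have : Subsingleton (ZMod (p i ^ e i)) := by
        rw [he i, pow_zero]
        infer_instance
      exact Subsingleton.elim _ _
    let constHom : ℤ →+ (Fin 1 → ℤ) := AddMonoidHom.mk' (fun k => fun _ => k) (fun a b => rfl)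
    refine isAddCyclic_of_surjective
      (F2.symm.toAddMonoidHom.comp (constHom.prod 0)) ?_
    refine F2.symm.surjective.comp ?_
    rintro ⟨v, d⟩
    refine ⟨v 0, Prod.ext (funext fun j => ?_) (Subsingleton.elim _ _)⟩
    rw [Subsingleton.elim j 0]
    rfl

end Structure

theorem closure_triple_cyclic (G : Type*) [Group G] (x y z : G)
    (hxy : IsCyclic ↥(Subgroup.closure ({x, y} : Set G)))
    (hxz : IsCyclic ↥(Subgroup.closure ({x, z} : Set G)))
    (hyz : IsCyclic ↥(Subgroup.closure ({y, z} : Set G))) :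
    IsCyclic ↥(Subgroup.closure ({x, y, z} : Set G)) := by
  classical
  have comm_pair : ∀ a b : G, IsCyclic ↥(Subgroup.closure ({a, b} : Set G)) → Commute a b := by
    intro a b hc
    obtain ⟨g, hg⟩ := hc
    have ham : a ∈ closure ({a, b} : Set G) := subset_closure (by simp)
    have hbm : b ∈ closure ({a, b} : Set G) := subset_closure (by simp)
    obtain ⟨m, hm⟩ := hg ⟨a, ham⟩
    obtain ⟨n, hn⟩ := hg ⟨b, hbm⟩
    have hm' : (g : G) ^ m = a := by simpa using congrArg Subtype.val hm
    have hn' : (g : G) ^ n = b := by simpa using congrArg Subtype.val hn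
    have hcom := (Commute.refl (g : G)).zpow_zpow m n
    rwa [hm', hn'] at hcom
  set S : Set G := {x, y, z} with hS
  have hxA : x ∈ closure S := subset_closure (by simp [hS])
  have hyA : y ∈ closure S := subset_closure (by simp [hS])
  have hzA : z ∈ closure S := subset_closure (by simp [hS])
  have hcommS : ∀ a ∈ S, ∀ b ∈ S, Commute a b := by
    intro a ha b hb
    simp only [hS, Set.mem_insert_iff, Set.mem_singleton_iff] at ha hb
    rcases ha with rfl | rfl | rfl <;> rcases hb with rfl | rfl | rfl
    · exact Commute.refl _
    · exact comm_pair _ _ hxy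
    · exact comm_pair _ _ hxz
    · exact (comm_pair _ _ hxy).symm
    · exact Commute.refl _
    · exact comm_pair _ _ hyz
    · exact (comm_pair _ _ hxz).symm
    · exact (comm_pair _ _ hyz).symm
    · exact Commute.refl _
  have hcomm : ∀ a ∈ closure S, ∀ b ∈ closure S, Commute a b := fun a ha b hb =>
    closure_induction₂ (p := fun a b _ _ => Commute a b)
      (fun s t hs ht => hcommS s hs t ht)
      (fun t _ => Commute.one_left t)
      (fun t _ => Commute.one_right t)
      (fun a b c _ _ _ h1 h2 => h1.mul_left h2)
      (fun b c a _ _ _ h1 h2 => h1.mul_right h2)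
      (fun a b _ _ hcom => hcom.inv_left)
      (fun a b _ _ hcom => hcom.inv_right)
      ha hb
  letI : CommGroup ↥(closure S) :=
    { (inferInstance : Group ↥(closure S)) with
      mul_comm := fun a b => Subtype.ext ((hcomm a a.2 b b.2).eq) }
  haveI : Finite ↥S :=
    (((Set.finite_singleton z).insert y).insert x).to_subtype
  haveI : Group.FG ↥(closure S) := Group.closure_finite_fg S
  refine (isAddCyclic_additive_iff).mp (aux_cyclic _ ?_)
  intro p hp f hf
  haveI : Fact p.Prime := ⟨hp⟩
  let f' : ↥(closure S) →* Multiplicative (ZMod p × ZMod p) :=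
    AddMonoidHom.toMultiplicativeRight f
  have hf' : Function.Surjective f' := by
    intro t
    obtain ⟨m, hm⟩ := hf t.toAdd
    refine ⟨m.toMul, ?_⟩
    show Multiplicative.ofAdd (f (Additive.ofMul m.toMul)) = t
    simp [hm]
  set x' : ↥(closure S) := ⟨x, hxA⟩ with hx'
  set y' : ↥(closure S) := ⟨y, hyA⟩ with hy'
  set z' : ↥(closure S) := ⟨z, hzA⟩ with hz'
  have hgen : closure ({x', y', z'} : Set ↥(closure S)) = ⊤ := by
    have hpre : (((↑) : ↥(closure S) → G) ⁻¹' S) = {x', y', z'} := by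
      ext a
      simp only [Set.mem_preimage, hS, Set.mem_insert_iff, Set.mem_singleton_iff,
        Subtype.ext_iff, hx', hy', hz']
    rw [← hpre]
    exact Subgroup.closure_closure_coe_preimage
  have hTop : Subgroup.closure ({f' x', f' y', f' z'} : Set (Multiplicative (ZMod p × ZMod p))) = ⊤ := by
    have himg : f' '' {x', y', z'} = {f' x', f' y', f' z'} := by
      simp [Set.image_insert_eq]
    rw [← himg, ← MonoidHom.map_closure, hgen, Subgroup.map_top_of_surjective f' hf']
  have pairCyc : ∀ a b : ↥(closure S), IsCyclic ↥(Subgroup.closure ({(a : G), (b : G)} : Set G)) →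
      IsCyclic ↥(Subgroup.closure ({f' a, f' b} : Set (Multiplicative (ZMod p × ZMod p)))) := by
    intro a b hab
    have hmap : Subgroup.map (closure S).subtype (closure ({a, b} : Set ↥(closure S)))
        = Subgroup.closure ({(a : G), (b : G)} : Set G) := by
      rw [MonoidHom.map_closure]
      congr 1
      simp [Set.image_insert_eq]
    haveI : IsCyclic ↥(closure ({a, b} : Set ↥(closure S))) := by
      haveI := hab
      have e1 := (Subgroup.equivMapOfInjective (closure ({a, b} : Set ↥(closure S)))
        (closure S).subtype (Subgroup.subtype_injective _)).trans
        (MulEquiv.subgroupCongr hmap)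
      exact isCyclic_of_surjective e1.symm e1.symm.surjective
    have hmap2 : Subgroup.map f' (closure ({a, b} : Set ↥(closure S)))
        = Subgroup.closure ({f' a, f' b} : Set (Multiplicative (ZMod p × ZMod p))) := by
      rw [MonoidHom.map_closure]
      congr 1
      simp [Set.image_insert_eq]
    have hres := isCyclic_of_surjective (f'.subgroupMap (closure ({a, b} : Set ↥(closure S))))
      (f'.subgroupMap_surjective _)
    rwa [hmap2] at hres
  have hUV := pairCyc x' y' hxy
  have hUW := pairCyc x' z' hxz
  have hVW := pairCyc y' z' hyz
  have hT1 : ∀ t : Multiplicative (ZMod p × ZMod p), t ^ p = 1 := pow_p_eq_one p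
  by_cases hu : f' x' = 1
  · have htop2 : Subgroup.closure ({f' y', f' z'} : Set (Multiplicative (ZMod p × ZMod p))) = ⊤ := by
      apply le_antisymm le_top
      rw [← hTop]
      refine (closure_le _).mpr ?_
      intro t ht
      simp only [Set.mem_insert_iff, Set.mem_singleton_iff] at ht
      rcases ht with rfl | rfl | rfl
      · rw [hu]; exact one_mem _
      · exact subset_closure (by simp)
      · exact subset_closure (by simp)
    haveI : IsCyclic ↥(⊤ : Subgroup (Multiplicative (ZMod p × ZMod p))) := htop2 ▸ hVW
    exact not_isCyclic_mult p hp
      (isCyclic_of_surjective Subgroup.topEquiv Subgroup.topEquiv.surjective)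
  · have hv : f' y' ∈ zpowers (f' x') := pair_zpow p hp hT1 hu hUV
    have hw : f' z' ∈ zpowers (f' x') := pair_zpow p hp hT1 hu hUW
    have hle : Subgroup.closure ({f' x', f' y', f' z'} : Set (Multiplicative (ZMod p × ZMod p)))
        ≤ zpowers (f' x') := by
      refine (closure_le _).mpr ?_
      intro t ht
      simp only [Set.mem_insert_iff, Set.mem_singleton_iff] at ht
      rcases ht with rfl | rfl | rfl
      · exact mem_zpowers _
      · exact hv
      · exact hw
    rw [hTop] at hle
    exact not_isCyclic_mult p hp ⟨⟨f' x', fun t => hle (mem_top t)⟩⟩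
end

section
/- Every maximal clique in the enhanced power graph of a group G is a subgroup of G which is locally cyclic (every finitely generated subgroup of it is cyclic). -/
open Subgroup

section Helpers

/-- product of pairwise coprime naturals each dividing N divides N -/
private lemma prod_dvd_of_pairwise_coprime {ι : Type*} (s : Finset ι) (m : ι → ℕ) {N : ℕ}
    (hc : ∀ i ∈ s, ∀ j ∈ s, i ≠ j → (m i).Coprime (m j)) (hd : ∀ i ∈ s, m i ∣ N) :
    (∏ i ∈ s, m i) ∣ N := by
  induction s using Finset.cons_induction with
  | empty => simp
  | cons a s' ha ih =>
    rw [Finset.prod_cons]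
    refine Nat.Coprime.mul_dvd_of_dvd_of_dvd ?_ (hd a (Finset.mem_cons_self a s')) ?_
    · exact Nat.Coprime.prod_right fun j hj =>
        hc a (Finset.mem_cons_self a s') j (Finset.mem_cons_of_mem hj)
          (fun h => ha (h ▸ hj))
    · exact ih (fun i hi j hj hij => hc i (Finset.mem_cons_of_mem hi) j
        (Finset.mem_cons_of_mem hj) hij) (fun i hi => hd i (Finset.mem_cons_of_mem hi))

/-- a pairwise-coprime direct sum of ZMod's is cyclic -/
private lemma isAddCyclic_directSum {ι : Type} [Fintype ι] (m : ι → ℕ)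
    (hm : ∀ i, m i ≠ 0)
    (hC : ∀ i j, i ≠ j → (m i).Coprime (m j)) :
    IsAddCyclic (DirectSum ι (fun i => ZMod (m i))) := by
  classical
  haveI : ∀ i, NeZero (m i) := fun i => ⟨hm i⟩
  have e : (DirectSum ι fun i => ZMod (m i)) ≃ ∀ i, ZMod (m i) := DFinsupp.equivFunOnFintype
  haveI : Finite (DirectSum ι fun i => ZMod (m i)) := Finite.of_equiv _ e.symm
  have hcard : Nat.card (DirectSum ι fun i => ZMod (m i)) = ∏ i, m i := by
    rw [Nat.card_congr e, Nat.card_pi]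
    exact Finset.prod_congr rfl fun i _ => Nat.card_zmod _
  have hsmul : ∀ x : DirectSum ι fun i => ZMod (m i), (∏ i, m i) • x = 0 := by
    intro x
    induction x using DirectSum.induction_on with
    | zero => simp
    | of i c =>
      have hmc : m i • c = 0 := by
        rw [nsmul_eq_mul, ZMod.natCast_self, zero_mul]
      have hc : (∏ j, m j) • c = 0 := by
        obtain ⟨k, hk⟩ := Finset.dvd_prod_of_mem m (Finset.mem_univ i)
        calc (∏ j, m j) • c = (m i * k) • c := by rw [hk]
        _ = k • (m i • c) := mul_nsmul c (m i) k
        _ = 0 := by rw [hmc, nsmul_zero]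
      rw [← map_nsmul, hc, map_zero]
    | add x y hx hy => rw [smul_add, hx, hy, add_zero]
  have hdvd1 : AddMonoid.exponent (DirectSum ι fun i => ZMod (m i)) ∣ ∏ i, m i :=
    AddMonoid.exponent_dvd_of_forall_nsmul_eq_zero hsmul
  have hdvd2 : (∏ i, m i) ∣ AddMonoid.exponent (DirectSum ι fun i => ZMod (m i)) := by
    refine prod_dvd_of_pairwise_coprime Finset.univ m
      (fun i _ j _ hij => hC i j hij) (fun i _ => ?_)
    have h1 : addOrderOf (DirectSum.of (fun i => ZMod (m i)) i 1) = m i := by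
      rw [addOrderOf_injective (DirectSum.of (fun i => ZMod (m i)) i)
        (DirectSum.of_injective i) 1, ZMod.addOrderOf_one]
    exact h1 ▸ AddMonoid.addOrder_dvd_exponent _
  exact IsAddCyclic.of_exponent_eq_card (by rw [hcard, Nat.dvd_antisymm hdvd1 hdvd2])

/-- A noncyclic f.g. abelian group surjects onto `ZMod p × ZMod p`. -/
private lemma exists_surj_of_not_cyclic {B : Type*} [CommGroup B] [Group.FG B]
    (h : ¬ IsCyclic B) :
    ∃ p : ℕ, p.Prime ∧ ∃ φ : B →* Multiplicative (ZMod p × ZMod p), Function.Surjective φ := by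
  classical
  have hA : ¬ IsAddCyclic (Additive B) := fun hc => h (isAddCyclic_additive_iff.mp hc)
  obtain ⟨n, ι, fι, p, hp, e, ⟨f⟩⟩ := AddCommGroup.equiv_free_prod_directSum_zmod (Additive B)
  suffices hs : ∃ q, q.Prime ∧ ∃ ψ : Additive B →+ ZMod q × ZMod q, Function.Surjective ψ by
    obtain ⟨q, hq, ψ, hψ⟩ := hs
    refine ⟨q, hq, AddMonoidHom.toMultiplicativeRight ψ, ?_⟩
    rw [AddMonoidHom.coe_toMultiplicativeRight]
    exact (Multiplicative.ofAdd.surjective.comp hψ).comp Additive.ofMul.surjective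
  have transfer : ∀ q, q.Prime →
      ∀ g : ((Fin n →₀ ℤ) × DirectSum ι fun i => ZMod (p i ^ e i)) →+ ZMod q × ZMod q,
      Function.Surjective g →
      ∃ q', q'.Prime ∧ ∃ ψ : Additive B →+ ZMod q' × ZMod q', Function.Surjective ψ :=
    fun q hq g hg => ⟨q, hq, g.comp f.toAddMonoidHom, hg.comp f.surjective⟩
  have notcyc : ¬ IsAddCyclic ((Fin n →₀ ℤ) × DirectSum ι fun i => ZMod (p i ^ e i)) :=
    fun hD => hA (isAddCyclic_of_surjective f.symm f.symm.surjective)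
  rcases n with _ | n
  · -- n = 0
    by_cases hC : ∀ i j, i ≠ j → (p i ^ e i).Coprime (p j ^ e j)
    · exfalso
      apply notcyc
      haveI : IsAddCyclic (DirectSum ι fun i => ZMod (p i ^ e i)) :=
        isAddCyclic_directSum _ (fun i => pow_ne_zero _ (hp i).ne_zero) hC
      haveI : Subsingleton (Fin 0 →₀ ℤ) := ⟨fun f g => Finsupp.ext fun a => a.elim0⟩
      exact isAddCyclic_of_surjective
        (AddMonoidHom.inr (Fin 0 →₀ ℤ) (DirectSum ι fun i => ZMod (p i ^ e i)))
        (fun x => ⟨x.2, Prod.ext (Subsingleton.elim _ _) rfl⟩)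
    · push_neg at hC
      obtain ⟨i, j, hij, hnc⟩ := hC
      set q := ((p i ^ e i).gcd (p j ^ e j)).minFac with hqdef
      have hq : q.Prime := Nat.minFac_prime hnc
      have hdi : q ∣ p i ^ e i := (Nat.minFac_dvd _).trans (Nat.gcd_dvd_left _ _)
      have hdj : q ∣ p j ^ e j := (Nat.minFac_dvd _).trans (Nat.gcd_dvd_right _ _)
      refine transfer q hq (AddMonoidHom.mk'
        (fun x => (ZMod.castHom hdi (ZMod q) (x.2 i), ZMod.castHom hdj (ZMod q) (x.2 j))) ?_) ?_
      · intro u v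
        simp [Prod.ext_iff, DirectSum.add_apply, map_add]
      · rintro ⟨a, b⟩
        obtain ⟨c, hc⟩ := ZMod.ringHom_surjective (ZMod.castHom hdi (ZMod q)) a
        obtain ⟨d, hd⟩ := ZMod.ringHom_surjective (ZMod.castHom hdj (ZMod q)) b
        refine ⟨(0, DirectSum.of (fun i => ZMod (p i ^ e i)) i c
            + DirectSum.of (fun i => ZMod (p i ^ e i)) j d), Prod.ext ?_ ?_⟩
        · show ZMod.castHom hdi (ZMod q) ((DirectSum.of (fun i => ZMod (p i ^ e i)) i c
            + DirectSum.of (fun i => ZMod (p i ^ e i)) j d) i) = a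
          rw [DirectSum.add_apply, DirectSum.of_eq_same, DirectSum.of_eq_of_ne _ _ _ hij,
            add_zero, hc]
        · show ZMod.castHom hdj (ZMod q) ((DirectSum.of (fun i => ZMod (p i ^ e i)) i c
            + DirectSum.of (fun i => ZMod (p i ^ e i)) j d) j) = b
          rw [DirectSum.add_apply, DirectSum.of_eq_same, DirectSum.of_eq_of_ne _ _ _ hij.symm,
            zero_add, hd]
  rcases n with _ | n
  · -- n = 1
    by_cases hE : ∀ i, e i = 0
    · exfalso
      apply notcyc
      haveI : ∀ i, Subsingleton (ZMod (p i ^ e i)) := fun i => by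
        rw [hE i, pow_zero]; infer_instance
      haveI : Subsingleton (DirectSum ι fun i => ZMod (p i ^ e i)) :=
        ⟨fun a b => DFinsupp.ext fun i => Subsingleton.elim _ _⟩
      refine isAddCyclic_of_surjective
        ((Finsupp.singleAddHom (0 : Fin 1)).prod
          (0 : ℤ →+ DirectSum ι fun i => ZMod (p i ^ e i))) ?_
      rintro ⟨g, t⟩
      refine ⟨g 0, Prod.ext ?_ (Subsingleton.elim _ _)⟩
      show Finsupp.single (0 : Fin 1) (g 0) = g
      exact Finsupp.ext fun a => by rw [Subsingleton.elim a (0 : Fin 1), Finsupp.single_eq_same]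
    · push_neg at hE
      obtain ⟨j, hj⟩ := hE
      have hq : (p j).Prime := hp j
      have hdj : p j ∣ p j ^ e j := dvd_pow_self _ hj
      refine transfer (p j) hq (AddMonoidHom.mk'
        (fun x => (((x.1 0 : ℤ) : ZMod (p j)), ZMod.castHom hdj (ZMod (p j)) (x.2 j))) ?_) ?_
      · intro u v
        simp [Prod.ext_iff, DirectSum.add_apply, Finsupp.add_apply, map_add]
      · rintro ⟨a, b⟩
        obtain ⟨x, hx⟩ := ZMod.intCast_surjective (n := p j) a
        obtain ⟨c, hc⟩ := ZMod.ringHom_surjective (ZMod.castHom hdj (ZMod (p j))) b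
        refine ⟨(Finsupp.single 0 x, DirectSum.of (fun i => ZMod (p i ^ e i)) j c),
          Prod.ext ?_ ?_⟩
        · show (((Finsupp.single (0 : Fin 1) x) 0 : ℤ) : ZMod (p j)) = a
          rw [Finsupp.single_eq_same, hx]
        · show ZMod.castHom hdj (ZMod (p j))
            ((DirectSum.of (fun i => ZMod (p i ^ e i)) j c) j) = b
          rw [DirectSum.of_eq_same, hc]
  · -- n ≥ 2
    have hne : (0 : Fin (n+2)) ≠ 1 := by simp [Fin.ext_iff]
    refine transfer 2 Nat.prime_two (AddMonoidHom.mk'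
      (fun x => (((x.1 0 : ℤ) : ZMod 2), ((x.1 1 : ℤ) : ZMod 2))) ?_) ?_
    · intro u v
      simp [Prod.ext_iff, Finsupp.add_apply]
    · rintro ⟨a, b⟩
      obtain ⟨x, hx⟩ := ZMod.intCast_surjective (n := 2) a
      obtain ⟨y, hy⟩ := ZMod.intCast_surjective (n := 2) b
      refine ⟨(Finsupp.single (0 : Fin (n+2)) x + Finsupp.single (1 : Fin (n+2)) y, 0), ?_⟩
      simp only [AddMonoidHom.mk'_apply, Finsupp.add_apply, Finsupp.single_eq_same,
        Finsupp.single_eq_of_ne hne, Finsupp.single_eq_of_ne hne.symm, add_zero, zero_add,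
        Prod.mk.injEq]
      exact ⟨hx, hy⟩

/-- There is no generating set of `Multiplicative (ZMod p × ZMod p)` whose pairs generate
cyclic subgroups. -/
private lemma no_pairwise_cyclic_gen {p : ℕ} (hp : p.Prime)
    (T : Set (Multiplicative (ZMod p × ZMod p)))
    (hT : Subgroup.closure T = ⊤)
    (hpair : ∀ x ∈ T, ∀ y ∈ T, IsCyclic ↥(Subgroup.closure {x, y})) : False := by
  haveI : Fact p.Prime := ⟨hp⟩
  let V := Multiplicative (ZMod p × ZMod p)
  have hcardV : Nat.card V = p * p := by
    rw [Nat.card_congr (Multiplicative.toAdd (α := ZMod p × ZMod p)), Nat.card_prod,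
      Nat.card_zmod]
  have hord : ∀ x : V, x ^ p = 1 := by
    intro x
    have h1 : ∀ a : ZMod p, p • a = 0 := fun a => by
      rw [nsmul_eq_mul, ZMod.natCast_self, zero_mul]
    have : Multiplicative.toAdd (x ^ p) = 0 := by
      rw [toAdd_pow]
      exact Prod.ext (h1 _) (h1 _)
    simpa using congrArg Multiplicative.ofAdd this
  by_cases hone : ∀ x ∈ T, x = 1
  · have hbot : Subgroup.closure T ≤ ⊥ := (Subgroup.closure_le _).mpr
      (fun x hx => by simp [hone x hx])
    rw [hT] at hbot
    have h1 : Nat.card V ≤ 1 := by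
      calc Nat.card V = Nat.card (⊤ : Subgroup V) := (Subgroup.card_top).symm
      _ ≤ Nat.card (⊥ : Subgroup V) := Subgroup.card_le_of_le hbot
      _ = 1 := Subgroup.card_bot
    rw [hcardV] at h1
    nlinarith [hp.two_le]
  · push_neg at hone
    obtain ⟨x₀, hx₀T, hx₀⟩ := hone
    have hordx₀ : orderOf x₀ = p := by
      rcases (Nat.dvd_prime hp).mp (orderOf_dvd_of_pow_eq_one (hord x₀)) with h | h
      · exact absurd (orderOf_eq_one_iff.mp h) hx₀
      · exact h
    have hsub : ∀ y ∈ T, y ∈ zpowers x₀ := by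
      intro y hyT
      obtain ⟨g, hg⟩ := (hpair x₀ hx₀T y hyT).exists_generator
      have hCz : ∀ c, c ∈ Subgroup.closure ({x₀, y} : Set V) → c ∈ zpowers (g : V) := by
        intro c hc
        obtain ⟨k, hk⟩ := Subgroup.mem_zpowers_iff.mp (hg ⟨c, hc⟩)
        refine Subgroup.mem_zpowers_iff.mpr ⟨k, ?_⟩
        have := congrArg Subtype.val hk
        rwa [SubgroupClass.coe_zpow] at this
      have hx₀C : x₀ ∈ Subgroup.closure ({x₀, y} : Set V) :=
        Subgroup.subset_closure (Set.mem_insert _ _)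
      have hyC : y ∈ Subgroup.closure ({x₀, y} : Set V) :=
        Subgroup.subset_closure (Set.mem_insert_of_mem _ rfl)
      have hle : zpowers x₀ ≤ zpowers (g : V) := Subgroup.zpowers_le.mpr (hCz x₀ hx₀C)
      have hcard_g_le : Nat.card ↥(zpowers (g : V)) ≤ p := by
        rw [Nat.card_zpowers]
        exact Nat.le_of_dvd hp.pos (orderOf_dvd_of_pow_eq_one (hord _))
      have hcard_x₀ : Nat.card ↥(zpowers x₀) = p := by rw [Nat.card_zpowers, hordx₀]
      have hcard_le : Nat.card ↥(zpowers (g : V)) ≤ Nat.card ↥(zpowers x₀) := by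
        rw [hcard_x₀]; exact hcard_g_le
      have hsets : (zpowers x₀ : Set V) = (zpowers (g : V) : Set V) := by
        refine Set.eq_of_subset_of_ncard_le (SetLike.coe_subset_coe.mpr hle) ?_ (Set.toFinite _)
        rw [← Nat.card_coe_set_eq, ← Nat.card_coe_set_eq]
        exact hcard_le
      have : y ∈ (zpowers (g : V) : Set V) := hCz y hyC
      rw [← hsets] at this
      exact this
    have htop : (⊤ : Subgroup V) ≤ zpowers x₀ := by
      rw [← hT]
      exact (Subgroup.closure_le _).mpr hsub
    have h1 : Nat.card V ≤ p := by
      calc Nat.card V = Nat.card (⊤ : Subgroup V) := (Subgroup.card_top).symm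
      _ ≤ Nat.card ↥(zpowers x₀) := Subgroup.card_le_of_le htop
      _ = p := by rw [Nat.card_zpowers, hordx₀]
    rw [hcardV] at h1
    nlinarith [hp.two_le]

/-- A commutative group generated by a finite pairwise-cyclic set is cyclic. -/
private lemma isCyclic_of_pairwise {B : Type*} [CommGroup B] {S : Set B} (hfin : S.Finite)
    (hgen : Subgroup.closure S = ⊤)
    (hpair : ∀ x ∈ S, ∀ y ∈ S, IsCyclic ↥(Subgroup.closure {x, y})) : IsCyclic B := by
  haveI : Group.FG B := Group.fg_iff.mpr ⟨S, hgen, hfin⟩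
  by_contra h
  obtain ⟨p, hp, φ, hφ⟩ := exists_surj_of_not_cyclic h
  apply no_pairwise_cyclic_gen hp (φ '' S)
  · rw [← MonoidHom.map_closure, hgen, ← MonoidHom.range_eq_map]
    exact MonoidHom.range_eq_top_of_surjective φ hφ
  · rintro _ ⟨x, hx, rfl⟩ _ ⟨y, hy, rfl⟩
    have himg : Subgroup.closure ({φ x, φ y} : Set _) =
        (Subgroup.closure ({x, y} : Set B)).map φ := by
      rw [MonoidHom.map_closure, Set.image_pair]
    rw [himg]
    haveI := hpair x hx y hy
    exact isCyclic_of_surjective _ (φ.subgroupMap_surjective (Subgroup.closure {x, y}))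

/-- The subgroup generated by a finite pairwise-cyclic subset of any group is cyclic. -/
private lemma isCyclic_closure_of_pairwise {G : Type*} [Group G] {t : Set G} (ht : t.Finite)
    (hpair : ∀ x ∈ t, ∀ y ∈ t, IsCyclic ↥(Subgroup.closure {x, y})) :
    IsCyclic ↥(Subgroup.closure t) := by
  have hcomm : ∀ x ∈ t, ∀ y ∈ t, Commute x y := by
    intro x hx y hy
    haveI := hpair x hx y hy
    letI : CommGroup ↥(Subgroup.closure ({x, y} : Set G)) := IsCyclic.commGroup
    have h1 : x ∈ Subgroup.closure ({x, y} : Set G) :=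
      Subgroup.subset_closure (Set.mem_insert _ _)
    have h2 : y ∈ Subgroup.closure ({x, y} : Set G) :=
      Subgroup.subset_closure (Set.mem_insert_of_mem _ rfl)
    have := mul_comm (⟨x, h1⟩ : ↥(Subgroup.closure ({x, y} : Set G))) ⟨y, h2⟩
    exact congrArg Subtype.val this
  have hHcomm : ∀ a ∈ Subgroup.closure t, ∀ b ∈ Subgroup.closure t, Commute a b := by
    intro a ha b hb
    exact Subgroup.closure_induction₂ (p := fun x y _ _ => Commute x y)
      (fun x y hx hy => hcomm x hx y hy) (fun x _ => Commute.one_left x) (fun x _ => Commute.one_right x)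
      (fun x y z _ _ _ h1 h2 => h1.mul_left h2)
      (fun y z x _ _ _ h1 h2 => h1.mul_right h2)
      (fun x y _ _ h1 => h1.inv_left)
      (fun x y _ _ h1 => h1.inv_right) ha hb
  letI : CommGroup ↥(Subgroup.closure t) :=
    { (inferInstance : Group ↥(Subgroup.closure t)) with
      mul_comm := fun a b => Subtype.ext (hHcomm a.1 a.2 b.1 b.2) }
  apply isCyclic_of_pairwise (S := ((Subgroup.closure t).subtype ⁻¹' t))
  · exact ht.preimage (Subtype.val_injective.injOn)
  · exact Subgroup.closure_preimage_eq_top t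
  · intro x hx y hy
    haveI : IsCyclic ↥(Subgroup.closure ({(x : G), (y : G)} : Set G)) := hpair x.1 hx y.1 hy
    have hmap : (Subgroup.closure ({x, y} : Set ↥(Subgroup.closure t))).map
        (Subgroup.closure t).subtype = Subgroup.closure ({(x : G), (y : G)} : Set G) := by
      rw [MonoidHom.map_closure, Set.image_pair]
      rfl
    have e := Subgroup.equivMapOfInjective (Subgroup.closure ({x, y} : Set ↥(Subgroup.closure t)))
      (Subgroup.closure t).subtype (Subgroup.subtype_injective _)
    rw [hmap] at e
    exact isCyclic_of_surjective e.symm e.symm.surjective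

/-- membership in a closure comes from a finite subset -/
private lemma exists_finset_closure {G : Type*} [Group G] {s : Set G} {a : G}
    (h : a ∈ Subgroup.closure s) :
    ∃ t : Finset G, ↑t ⊆ s ∧ a ∈ Subgroup.closure (↑t : Set G) := by
  classical
  induction h using Subgroup.closure_induction with
  | mem x hx => exact ⟨{x}, by simpa using hx,
      Subgroup.subset_closure (by simp)⟩
  | one => exact ⟨∅, by simp, Subgroup.one_mem _⟩
  | mul x y hx hy ihx ihy =>
    obtain ⟨t₁, ht₁, hat₁⟩ := ihx
    obtain ⟨t₂, ht₂, hat₂⟩ := ihy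
    refine ⟨t₁ ∪ t₂, by rw [Finset.coe_union]; exact Set.union_subset ht₁ ht₂, mul_mem ?_ ?_⟩
    · exact Subgroup.closure_mono (by rw [Finset.coe_union]; exact Set.subset_union_left) hat₁
    · exact Subgroup.closure_mono (by rw [Finset.coe_union]; exact Set.subset_union_right) hat₂
  | inv x hx ihx =>
    obtain ⟨t₁, ht₁, hat₁⟩ := ihx
    exact ⟨t₁, ht₁, inv_mem hat₁⟩

end Helpers

/-- The enhanced power graph of a group: distinct `x, y` are adjacent iff `⟨x, y⟩` is cyclic. -/
def enhancedPowerGraph (G : Type*) [Group G] : SimpleGraph G where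
  Adj x y := x ≠ y ∧ IsCyclic ↥(Subgroup.closure ({x, y} : Set G))
  symm := by
    constructor
    rintro x y ⟨h, hc⟩
    exact ⟨h.symm, by rwa [Set.pair_comm]⟩
  loopless := by constructor; rintro x ⟨h, _⟩; exact h rfl

theorem maximal_clique_enhanced (G : Type*) [Group G] (s : Set G)
    (hs : (enhancedPowerGraph G).IsClique s)
    (hmax : ∀ t : Set G, (enhancedPowerGraph G).IsClique t → s ⊆ t → s = t) :
    (∃ H : Subgroup G, (H : Set G) = s) ∧
      ∀ t : Finset G, (↑t : Set G) ⊆ s →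
        IsCyclic ↥(Subgroup.closure (↑t : Set G)) := by
  have hzpow : ∀ x : G, IsCyclic ↥(zpowers x) := by
    intro x
    refine ⟨⟨⟨x, mem_zpowers x⟩, fun b => ?_⟩⟩
    obtain ⟨k, hk⟩ := Subgroup.mem_zpowers_iff.mp b.2
    exact Subgroup.mem_zpowers_iff.mpr ⟨k, Subtype.ext (by rw [SubgroupClass.coe_zpow]; exact hk)⟩
  have hpair_s : ∀ x ∈ s, ∀ y ∈ s, IsCyclic ↥(Subgroup.closure ({x, y} : Set G)) := by
    intro x hx y hy
    by_cases hxy : x = y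
    · subst hxy
      rw [Set.pair_eq_singleton, ← Subgroup.zpowers_eq_closure]
      exact hzpow x
    · exact (hs hx hy hxy).2
  have part2 : ∀ t : Finset G, (↑t : Set G) ⊆ s →
      IsCyclic ↥(Subgroup.closure (↑t : Set G)) := by
    intro t hts
    exact isCyclic_closure_of_pairwise (t.finite_toSet)
      (fun x hx y hy => hpair_s x (hts hx) y (hts hy))
  refine ⟨?_, part2⟩
  classical
  have hclique : (enhancedPowerGraph G).IsClique (↑(Subgroup.closure s) : Set G) := by
    intro a ha b hb hab
    obtain ⟨t₁, ht₁, hat₁⟩ := exists_finset_closure ha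
    obtain ⟨t₂, ht₂, hbt₂⟩ := exists_finset_closure hb
    have hsub : (↑(t₁ ∪ t₂) : Set G) ⊆ s := by
      rw [Finset.coe_union]; exact Set.union_subset ht₁ ht₂
    haveI hLcyc := part2 (t₁ ∪ t₂) hsub
    have hab' : Subgroup.closure ({a, b} : Set G) ≤ Subgroup.closure (↑(t₁ ∪ t₂) : Set G) := by
      refine (Subgroup.closure_le _).mpr ?_
      rintro z (rfl | rfl)
      · exact Subgroup.closure_mono (by rw [Finset.coe_union]; exact Set.subset_union_left) hat₁
      · exact Subgroup.closure_mono (by rw [Finset.coe_union]; exact Set.subset_union_right) hbt₂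
    refine ⟨hab, ?_⟩
    haveI : IsCyclic ↥((Subgroup.closure ({a, b} : Set G)).subgroupOf
        (Subgroup.closure (↑(t₁ ∪ t₂) : Set G))) := Subgroup.isCyclic _
    have e := Subgroup.subgroupOfEquivOfLe hab'
    exact isCyclic_of_surjective e e.surjective
  have heq : s = ↑(Subgroup.closure s) := hmax _ hclique Subgroup.subset_closure
  exact ⟨Subgroup.closure s, heq.symm⟩
end
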